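/- arXiv:2510.06933 — 9 statements merged into one kernel-verified Lean document; each statement's English description precedes it below -/
import Mathlib

section
/- For a graph G of order n, a parameter α ∈ [0,1], and 1 ≤ k ≤ n, the k-th largest eigenvalue of A_α(G) = αD(G) + (1−α)A(G) is at most d(v_k), the k-th largest vertex degree of G. In particular, the largest eigenvalue of A_α(G) is at most the maximum degree Δ(G). -/
/-- The `A_α`-matrix of a graph: `α·D(G) + (1-α)·A(G)`. -/
noncomputable def Aalpha {n : ℕ} (α : ℝ) (G : SimpleGraph (Fin n)) [DecidableRel G.Adj] :
    Matrix (Fin n) (Fin n) ℝ :=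
  α • Matrix.diagonal (fun v => (G.degree v : ℝ)) + (1 - α) • G.adjMatrix ℝ

lemma Aalpha_isHermitian {n : ℕ} (α : ℝ) (G : SimpleGraph (Fin n)) [DecidableRel G.Adj] :
    (Aalpha α G).IsHermitian := by
  apply Matrix.IsHermitian.ext
  intro i j
  by_cases h : G.Adj i j <;> by_cases hij : i = j <;>
    simp_all [Aalpha, Matrix.diagonal_apply, SimpleGraph.adj_comm, eq_comm]

/-- The `k`-th largest eigenvalue (1-indexed) of a Hermitian matrix. -/
noncomputable def eigDesc {n : ℕ} {M : Matrix (Fin n) (Fin n) ℝ} (hM : M.IsHermitian)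
    (k : ℕ) : ℝ :=
  ((Finset.univ.val.map hM.eigenvalues).sort (· ≤ ·)).getD (n - k) 0

/-- The `k`-th largest vertex degree (1-indexed) of `G`. -/
noncomputable def degDesc {n : ℕ} (G : SimpleGraph (Fin n)) [DecidableRel G.Adj] (k : ℕ) : ℝ :=
  ((Finset.univ.val.map (fun v => (G.degree v : ℝ))).sort (· ≤ ·)).getD (n - k) 0

section Aux

open Matrix Finset Module

/-- dotProduct is additive in the left argument over finite sums. -/
private lemma sum_dotProduct' {n : ℕ} (s : Finset (Fin n)) (f : Fin n → Fin n → ℝ)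
    (y : Fin n → ℝ) : (∑ i ∈ s, f i) ⬝ᵥ y = ∑ i ∈ s, f i ⬝ᵥ y := by
  simp only [dotProduct, Finset.sum_apply, Finset.sum_mul]
  rw [Finset.sum_comm]

private lemma dotProduct_sum' {n : ℕ} (s : Finset (Fin n)) (x : Fin n → ℝ)
    (f : Fin n → Fin n → ℝ) : x ⬝ᵥ (∑ i ∈ s, f i) = ∑ i ∈ s, x ⬝ᵥ f i := by
  simp only [dotProduct, Finset.sum_apply, Finset.mul_sum]
  rw [Finset.sum_comm]

/-- Inner product of two linear combinations of dot-orthonormal vectors. -/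
private lemma dot_sum_sum {n : ℕ} (J : Finset (Fin n)) (v : Fin n → Fin n → ℝ)
    (hv : ∀ i j, v i ⬝ᵥ v j = if i = j then (1:ℝ) else 0)
    (c d : Fin n → ℝ) :
    (∑ i ∈ J, c i • v i) ⬝ᵥ (∑ j ∈ J, d j • v j) = ∑ i ∈ J, c i * d i := by
  rw [sum_dotProduct']
  refine Finset.sum_congr rfl fun i hi => ?_
  rw [smul_dotProduct, dotProduct_sum']
  simp only [dotProduct_smul, hv, smul_eq_mul, mul_ite, mul_one, mul_zero]
  rw [Finset.sum_ite_eq J i d |>.trans (if_pos hi)]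

/-- Members of the span of `v '' J` are linear combinations over `J`. -/
private lemma exists_sum_of_mem_span {n : ℕ} (v : Fin n → Fin n → ℝ) (J : Finset (Fin n))
    (x : Fin n → ℝ) (hx : x ∈ Submodule.span ℝ (v '' ↑J)) :
    ∃ c : Fin n → ℝ, x = ∑ j ∈ J, c j • v j := by
  rw [Finsupp.mem_span_image_iff_linearCombination] at hx
  obtain ⟨l, hl, rfl⟩ := hx
  refine ⟨l, ?_⟩
  rw [Finsupp.linearCombination_apply, Finsupp.sum]
  exact Finset.sum_subset (by simpa [Finsupp.mem_supported] using hl)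
    (fun j _ hj => by simp [Finsupp.notMem_support_iff.mp hj])

/-- Lower bound on the quadratic form over a span of eigenvectors. -/
private lemma quad_lower {n : ℕ} (M : Matrix (Fin n) (Fin n) ℝ) (v : Fin n → Fin n → ℝ)
    (hv : ∀ i j, v i ⬝ᵥ v j = if i = j then (1:ℝ) else 0)
    (lam : Fin n → ℝ) (J : Finset (Fin n)) (hMv : ∀ j ∈ J, M *ᵥ v j = lam j • v j)
    (a : ℝ) (ha : ∀ j ∈ J, a ≤ lam j) (x : Fin n → ℝ)
    (hx : x ∈ Submodule.span ℝ (v '' ↑J)) :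
    a * (x ⬝ᵥ x) ≤ x ⬝ᵥ (M *ᵥ x) := by
  obtain ⟨c, rfl⟩ := exists_sum_of_mem_span v J x hx
  have hMx : M *ᵥ (∑ j ∈ J, c j • v j) = ∑ j ∈ J, (c j * lam j) • v j := by
    rw [show M *ᵥ (∑ j ∈ J, c j • v j) = M.mulVecLin (∑ j ∈ J, c j • v j) from rfl,
      map_sum]
    refine Finset.sum_congr rfl fun j hj => ?_
    rw [LinearMap.map_smul, Matrix.mulVecLin_apply, hMv j hj, smul_smul]
  rw [hMx, dot_sum_sum J v hv, dot_sum_sum J v hv, Finset.mul_sum]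
  refine Finset.sum_le_sum fun j hj => ?_
  have := mul_le_mul_of_nonneg_right (ha j hj) (mul_self_nonneg (c j))
  nlinarith [this]

/-- Eigenvalue comparison via dimension counting. -/
private lemma key_compare {n : ℕ} {M N : Matrix (Fin n) (Fin n) ℝ}
    (hMN : ∀ x : Fin n → ℝ, x ⬝ᵥ (M *ᵥ x) ≤ x ⬝ᵥ (N *ᵥ x))
    {v w : Fin n → Fin n → ℝ}
    (hv : ∀ i j, v i ⬝ᵥ v j = if i = j then (1:ℝ) else 0)
    (hw : ∀ i j, w i ⬝ᵥ w j = if i = j then (1:ℝ) else 0)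
    {lam mu : Fin n → ℝ} {J K : Finset (Fin n)}
    (hMv : ∀ j ∈ J, M *ᵥ v j = lam j • v j)
    (hNw : ∀ j ∈ K, N *ᵥ w j = mu j • w j)
    (hcard : n < J.card + K.card)
    {a b : ℝ} (haJ : ∀ j ∈ J, a ≤ lam j) (hbK : ∀ j ∈ K, mu j ≤ b) : a ≤ b := by
  classical
  have hli : ∀ (u : Fin n → Fin n → ℝ),
      (∀ i j, u i ⬝ᵥ u j = if i = j then (1:ℝ) else 0) → LinearIndependent ℝ u := by
    intro u hu
    rw [Fintype.linearIndependent_iff]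
    intro g hg i
    have h := congrArg (fun y => y ⬝ᵥ u i) hg
    simpa [sum_dotProduct', smul_dotProduct, hu, Finset.sum_ite_eq'] using h
  have hrank : ∀ (u : Fin n → Fin n → ℝ)
      (hu : ∀ i j, u i ⬝ᵥ u j = if i = j then (1:ℝ) else 0) (S : Finset (Fin n)),
      finrank ℝ ↥(Submodule.span ℝ (u '' ↑S)) = S.card := by
    intro u hu S
    rw [Set.image_eq_range u (↑S : Set (Fin n))]
    have hli' : LinearIndependent ℝ (fun x : ↥(↑S : Set (Fin n)) => u ↑x) :=
      (hli u hu).comp _ Subtype.val_injective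
    rw [finrank_span_eq_card hli']
    simp
  set S := Submodule.span ℝ (v '' ↑J) with hSdef
  set T := Submodule.span ℝ (w '' ↑K) with hTdef
  have hST : finrank ℝ ↥(S ⊔ T) + finrank ℝ ↥(S ⊓ T) = J.card + K.card := by
    rw [Submodule.finrank_sup_add_finrank_inf_eq, hrank v hv J, hrank w hw K]
  have hle : finrank ℝ ↥(S ⊔ T) ≤ n := by
    simpa [Module.finrank_fin_fun] using Submodule.finrank_le (S ⊔ T)
  have hpos : 0 < finrank ℝ ↥(S ⊓ T) := by omega
  rw [Module.finrank_pos_iff] at hpos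
  obtain ⟨y, hy0⟩ := exists_ne (0 : ↥(S ⊓ T))
  set x : Fin n → ℝ := (y : Fin n → ℝ) with hxdef
  have hx0 : x ≠ 0 := fun h => hy0 (Subtype.ext h)
  have hxS : x ∈ S := (Submodule.mem_inf.mp y.2).1
  have hxT : x ∈ T := (Submodule.mem_inf.mp y.2).2
  have h1 : a * (x ⬝ᵥ x) ≤ x ⬝ᵥ (M *ᵥ x) := quad_lower M v hv lam J hMv a haJ x hxS
  have h2 : x ⬝ᵥ (N *ᵥ x) ≤ b * (x ⬝ᵥ x) := by
    have := quad_lower (-N) w hw (fun j => -mu j) K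
      (fun j hj => by rw [Matrix.neg_mulVec, hNw j hj, neg_smul])
      (-b) (fun j hj => neg_le_neg (hbK j hj)) x hxT
    rw [Matrix.neg_mulVec, dotProduct_neg] at this
    linarith
  have hxx : 0 < x ⬝ᵥ x := by
    rcases lt_or_eq_of_le (Finset.sum_nonneg fun i _ => mul_self_nonneg (x i) :
        (0:ℝ) ≤ x ⬝ᵥ x) with h | h
    · exact h
    · exact absurd (dotProduct_self_eq_zero.mp h.symm) hx0
  have : a * (x ⬝ᵥ x) ≤ b * (x ⬝ᵥ x) := le_trans h1 (le_trans (hMN x) h2)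
  exact le_of_mul_le_mul_right this hxx

/-- At least `n - i` values of `f` are `≥` the `i`-th (0-indexed) value of the ascending sort. -/
private lemma count_ge {n : ℕ} (f : Fin n → ℝ) (i : ℕ) (hi : i < n) :
    n - i ≤ (Finset.univ.filter fun j =>
      ((Finset.univ.val.map f).sort (· ≤ ·)).getD i 0 ≤ f j).card ∧
    i + 1 ≤ (Finset.univ.filter fun j =>
      f j ≤ ((Finset.univ.val.map f).sort (· ≤ ·)).getD i 0).card := by
  classical
  set L := (Finset.univ.val.map f).sort (· ≤ ·) with hLdef
  have hlen : L.length = n := by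
    rw [hLdef, Multiset.length_sort, Multiset.card_map]
    simp
  have hi' : i < L.length := by omega
  set a := L.getD i 0 with hadef
  have ha : a = L[i] := List.getD_eq_getElem L 0 hi'
  have hs : List.Pairwise (· ≤ ·) L := Multiset.pairwise_sort _ _
  -- counts as countP over L
  have hcount : ∀ p : ℝ → Prop, ∀ _ : DecidablePred p,
      (Finset.univ.filter fun j => p (f j)).card = L.countP (fun x => decide (p x)) := by
    intro p hp
    have h1 : (Finset.univ.filter fun j => p (f j)).card
        = Multiset.countP p (Finset.univ.val.map f) := by
      rw [Multiset.countP_map]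
      rfl
    have h2 : Multiset.countP p (Finset.univ.val.map f) = Multiset.countP p (↑L) := by
      rw [hLdef, Multiset.sort_eq]
    rw [h1, h2, Multiset.coe_countP]
  constructor
  · -- drop side
    have hdropmem : ∀ x ∈ L.drop i, a ≤ x := by
      have hsd : List.Pairwise (· ≤ ·) (L.drop i) :=
        List.Pairwise.sublist (List.drop_sublist i L) hs
      have hd : L.drop i = L[i] :: L.drop (i + 1) := List.drop_eq_getElem_cons hi'
      intro x hx
      rw [ha]
      rw [hd, List.mem_cons] at hx
      rcases hx with h | h
      · exact h ▸ le_rfl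
      · rw [hd] at hsd
        exact List.rel_of_pairwise_cons hsd h
    have hkey : n - i ≤ L.countP (fun x => decide (a ≤ x)) := by
      have e1 : ((L.drop i).filter (fun x => decide (a ≤ x))) = L.drop i :=
        List.filter_eq_self.mpr fun x hx => decide_eq_true (hdropmem x hx)
      calc n - i = (L.drop i).length := by rw [List.length_drop, hlen]
        _ = ((L.drop i).filter (fun x => decide (a ≤ x))).length := by rw [e1]
        _ ≤ (L.filter (fun x => decide (a ≤ x))).length :=
            List.Sublist.length_le (List.Sublist.filter _ (List.drop_sublist i L))
        _ = L.countP (fun x => decide (a ≤ x)) := List.countP_eq_length_filter.symm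
    rw [hcount (fun x => a ≤ x) inferInstance]
    exact hkey
  · -- take side
    have htakemem : ∀ x ∈ L.take (i + 1), x ≤ a := by
      intro x hx
      rw [List.mem_take_iff_getElem] at hx
      obtain ⟨m, hm, rfl⟩ := hx
      have hm' : m < L.length := lt_of_lt_of_le (lt_of_lt_of_le hm inf_le_left) (by omega)
      have hmi : m ≤ i := by
        have := lt_of_lt_of_le hm inf_le_left; omega
      rw [ha]
      exact hs.rel_get_of_le (a := ⟨m, hm'⟩) (b := ⟨i, hi'⟩) hmi
    have hkey : i + 1 ≤ L.countP (fun x => decide (x ≤ a)) := by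
      have e1 : ((L.take (i + 1)).filter (fun x => decide (x ≤ a))) = L.take (i + 1) :=
        List.filter_eq_self.mpr fun x hx => decide_eq_true (htakemem x hx)
      calc i + 1 = (L.take (i + 1)).length := by
            rw [List.length_take, hlen]; omega
        _ = ((L.take (i + 1)).filter (fun x => decide (x ≤ a))).length := by rw [e1]
        _ ≤ (L.filter (fun x => decide (x ≤ a))).length :=
            List.Sublist.length_le (List.Sublist.filter _ (List.take_sublist (i + 1) L))
        _ = L.countP (fun x => decide (x ≤ a)) := List.countP_eq_length_filter.symm
    rw [hcount (fun x => x ≤ a) inferInstance]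
    exact hkey

end Aux

open Matrix in
/-- For `α ∈ [0,1]` and `1 ≤ k ≤ n`, `λ_k(A_α(G)) ≤ d(v_k)`, the `k`-th largest degree.
In particular `λ_1(A_α(G)) ≤ Δ(G)`. -/
theorem Aalpha_eigenvalue_le_degree (n : ℕ) (G : SimpleGraph (Fin n)) [DecidableRel G.Adj]
    (α : ℝ) (hα0 : 0 ≤ α) (hα1 : α ≤ 1) :
    (∀ k : ℕ, 1 ≤ k → k ≤ n → eigDesc (Aalpha_isHermitian α G) k ≤ degDesc G k) ∧
    (1 ≤ n → eigDesc (Aalpha_isHermitian α G) 1 ≤ (G.maxDegree : ℝ)) := by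
  classical
  set hM := Aalpha_isHermitian α G with hMdef
  set d : Fin n → ℝ := fun v => (G.degree v : ℝ) with hddef
  -- the quadratic form hypothesis
  have hMN : ∀ x : Fin n → ℝ,
      x ⬝ᵥ (Aalpha α G *ᵥ x) ≤ x ⬝ᵥ (Matrix.diagonal d *ᵥ x) := by
    intro x
    have hlap : (0:ℝ) ≤ x ⬝ᵥ (G.lapMatrix ℝ *ᵥ x) := by
      have := (SimpleGraph.posSemidef_lapMatrix ℝ G).dotProduct_mulVec_nonneg x
      simpa using this
    have hNM : Matrix.diagonal d - Aalpha α G = (1 - α) • G.lapMatrix ℝ := by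
      show Matrix.diagonal d - (α • Matrix.diagonal d + (1 - α) • G.adjMatrix ℝ)
        = (1 - α) • (G.degMatrix ℝ - G.adjMatrix ℝ)
      have hdm : G.degMatrix ℝ = Matrix.diagonal d := rfl
      rw [hdm]
      module
    have hsub := congrArg (fun Q => x ⬝ᵥ (Q *ᵥ x)) hNM
    simp only [Matrix.sub_mulVec, dotProduct_sub, Matrix.smul_mulVec,
      dotProduct_smul, smul_eq_mul] at hsub
    nlinarith [mul_nonneg (by linarith : (0:ℝ) ≤ 1 - α) hlap]
  -- orthonormal eigenvectors of Aalpha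
  set v : Fin n → Fin n → ℝ := fun j => hM.eigenvectorBasis j with hvdef
  have hv : ∀ i j, v i ⬝ᵥ v j = if i = j then (1:ℝ) else 0 := by
    intro i j
    have h := orthonormal_iff_ite.mp hM.eigenvectorBasis.orthonormal i j
    rw [EuclideanSpace.inner_eq_star_dotProduct] at h
    rw [dotProduct_comm]
    simpa [hvdef] using h
  have hMv : ∀ j, Aalpha α G *ᵥ v j = hM.eigenvalues j • v j := fun j =>
    hM.mulVec_eigenvectorBasis j
  -- standard basis eigenvectors of the diagonal matrix
  set w : Fin n → Fin n → ℝ := fun j => Pi.single j 1 with hwdef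
  have hw : ∀ i j, w i ⬝ᵥ w j = if i = j then (1:ℝ) else 0 := by
    intro i j
    by_cases h : i = j <;>
      simp [hwdef, dotProduct, Pi.single_apply, h, Finset.sum_ite_eq, eq_comm]
  have hNw : ∀ j, Matrix.diagonal d *ᵥ w j = d j • w j := by
    intro j
    funext i
    by_cases h : i = j <;>
      simp [hwdef, Matrix.mulVec_diagonal, Pi.single_apply, h, Pi.smul_apply, smul_eq_mul]
  -- part 1
  have part1 : ∀ k : ℕ, 1 ≤ k → k ≤ n →
      eigDesc (Aalpha_isHermitian α G) k ≤ degDesc G k := by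
    intro k hk1 hkn
    set i := n - k with hidef
    have hi : i < n := by omega
    obtain ⟨hc1, _⟩ := count_ge hM.eigenvalues i hi
    obtain ⟨_, hc2⟩ := count_ge d i hi
    set a := ((Finset.univ.val.map hM.eigenvalues).sort (· ≤ ·)).getD i 0 with hadef
    set b := ((Finset.univ.val.map d).sort (· ≤ ·)).getD i 0 with hbdef
    have hea : eigDesc (Aalpha_isHermitian α G) k = a := rfl
    have heb : degDesc G k = b := rfl
    rw [hea, heb]
    set J := Finset.univ.filter (fun j => a ≤ hM.eigenvalues j) with hJdef
    set K := Finset.univ.filter (fun j => d j ≤ b) with hKdef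
    have hcard : n < J.card + K.card := by
      have h1 : n - i ≤ J.card := hc1
      have h2 : i + 1 ≤ K.card := hc2
      omega
    exact key_compare hMN hv hw (fun j _ => hMv j) (fun j _ => hNw j) hcard
      (fun j hj => (Finset.mem_filter.mp hj).2) (fun j hj => (Finset.mem_filter.mp hj).2)
  refine ⟨part1, fun hn => le_trans (part1 1 le_rfl hn) ?_⟩
  -- degDesc G 1 ≤ maxDegree
  set L := ((Finset.univ.val.map d).sort (· ≤ ·)) with hLdef
  have hlen : L.length = n := by
    rw [hLdef, Multiset.length_sort, Multiset.card_map]; simp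
  have hi : n - 1 < L.length := by omega
  have hmem : L.getD (n - 1) 0 ∈ L := by
    rw [List.getD_eq_getElem L 0 hi]
    exact List.getElem_mem hi
  have hmem2 : L.getD (n - 1) 0 ∈ Finset.univ.val.map d := by
    rw [hLdef] at hmem
    exact (Multiset.mem_sort _).mp hmem
  obtain ⟨u, _, hu⟩ := Multiset.mem_map.mp hmem2
  have : degDesc G 1 = L.getD (n - 1) 0 := rfl
  rw [this, ← hu]
  simp only [hddef]
  exact_mod_cast G.degree_le_maxDegree u
end

section
/- For α ∈ [0,1], the eigenvalues of A_α(S_n) for the star S_n on n vertices are: λ_1 = (αn + √(α²n² + 4(n−1)(1−2α)))/2, λ_n = (αn − √(α²n² + 4(n−1)(1−2α)))/2, and λ_k = α for 2 ≤ k ≤ n−1. -/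
/-- The star `S_n` on `n` vertices, with center `0`. -/
def starGraph (n : ℕ) [NeZero n] : SimpleGraph (Fin n) where
  Adj u v := u ≠ v ∧ (u = 0 ∨ v = 0)
  symm := ⟨fun u v h => ⟨h.1.symm, h.2.symm⟩⟩
  loopless := ⟨fun v h => h.1 rfl⟩

instance (n : ℕ) [NeZero n] : DecidableRel (starGraph n).Adj := fun u v =>
  inferInstanceAs (Decidable (u ≠ v ∧ (u = 0 ∨ v = 0)))

/- ### auxiliary lemmas -/

lemma detProdEig {n : ℕ} (M : Matrix (Fin n) (Fin n) ℝ) (hM : M.IsHermitian) (x : ℝ) :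
    (x • (1 : Matrix (Fin n) (Fin n) ℝ) - M).det = ∏ i, (x - hM.eigenvalues i) := by
  have h := hM.conjStarAlgAut_star_eigenvectorUnitary
  rw [Unitary.conjStarAlgAut_star_apply] at h
  set U := (hM.eigenvectorUnitary : Matrix (Fin n) (Fin n) ℝ)
  have hU : star U * U = 1 := Unitary.coe_star_mul_self _
  have key : star U * (x • 1 - M) * U = Matrix.diagonal (fun i => x - hM.eigenvalues i) := by
    rw [mul_sub, sub_mul, mul_assoc, h]
    rw [Matrix.smul_mul, one_mul, Matrix.mul_smul, hU]
    ext i j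
    by_cases hij : i = j <;> simp [Matrix.diagonal_apply, hij, Matrix.one_apply]
  have h2 := congrArg Matrix.det key
  rw [Matrix.det_mul, Matrix.det_mul, Matrix.det_diagonal] at h2
  have hdet : (star U).det * U.det = 1 := by
    rw [← Matrix.det_mul, hU, Matrix.det_one]
  calc (x • (1:Matrix (Fin n) (Fin n) ℝ) - M).det
      = ((star U).det * U.det) * (x • 1 - M).det := by rw [hdet, one_mul]
    _ = (star U).det * (x • 1 - M).det * U.det := by ring
    _ = ∏ i, (x - hM.eigenvalues i) := h2

lemma star_degree_zero (n : ℕ) [NeZero n] : (starGraph n).degree 0 = n - 1 := by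
  rw [← SimpleGraph.card_neighborFinset_eq_degree]
  have : (starGraph n).neighborFinset 0 = Finset.univ.erase 0 := by
    ext v
    rw [SimpleGraph.mem_neighborFinset]
    simp [SimpleGraph.mem_neighborFinset, starGraph, eq_comm]
  rw [this, Finset.card_erase_of_mem (Finset.mem_univ _), Finset.card_univ, Fintype.card_fin]

lemma star_degree_ne (n : ℕ) [NeZero n] (v : Fin n) (hv : v ≠ 0) : (starGraph n).degree v = 1 := by
  rw [← SimpleGraph.card_neighborFinset_eq_degree]
  have : (starGraph n).neighborFinset v = {0} := by
    ext u
    rw [SimpleGraph.mem_neighborFinset]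
    simp only [SimpleGraph.mem_neighborFinset, starGraph, Finset.mem_singleton]
    constructor
    · rintro ⟨h1, h2 | h2⟩ <;> [exact absurd h2 hv; exact h2]
    · rintro rfl; exact ⟨hv, Or.inr rfl⟩
  rw [this, Finset.card_singleton]

lemma Aalpha_star_apply (n : ℕ) [NeZero n] (α : ℝ) (i j : Fin n) :
    Aalpha α (starGraph n) i j =
      if i = j then (if i = 0 then α * ((n : ℝ) - 1) else α)
      else (if i = 0 ∨ j = 0 then 1 - α else 0) := by
  have h1 : 1 ≤ n := Nat.one_le_iff_ne_zero.mpr (NeZero.ne n)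
  simp only [Aalpha, Matrix.add_apply, Matrix.smul_apply, Matrix.diagonal_apply,
    SimpleGraph.adjMatrix_apply, smul_eq_mul]
  by_cases hij : i = j
  · subst hij
    by_cases hi : i = 0
    · subst hi
      simp [star_degree_zero, Nat.cast_sub h1, SimpleGraph.irrefl]
    · simp [hi, star_degree_ne n i hi, SimpleGraph.irrefl]
  · by_cases h : i = 0 ∨ j = 0
    · simp [hij, h, starGraph]
    · simp [hij, h, starGraph]

lemma star_det (m : ℕ) (α x : ℝ) (hx : x ≠ α)
    (N : Matrix (Fin (m+2)) (Fin (m+2)) ℝ)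
    (hN : ∀ i j, N i j = if i = j then (if i = 0 then x - α * ((m:ℝ)+1) else x - α)
      else (if i = 0 ∨ j = 0 then -(1 - α) else 0)) :
    N.det = (x - α)^m * ((x - α) * (x - α * ((m:ℝ)+1)) - ((m:ℝ)+1) * (1-α)^2) := by
  have hxα : x - α ≠ 0 := sub_ne_zero.mpr hx
  set c : ℝ := (1 - α)/(x - α) with hc
  set E : Matrix (Fin (m+2)) (Fin (m+2)) ℝ :=
    fun i j => if j = 0 then (if i = 0 then 1 else c) else if i = j then 1 else 0 with hE
  have hEdet : E.det = 1 := by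
    rw [Matrix.det_of_lowerTriangular E]
    · simp [hE]
    · intro i j hij
      have hji : (i:ℕ) < j := hij
      have hj0 : j ≠ 0 := by
        intro h; subst h; exact absurd hji (by simp)
      have : i ≠ j := Fin.ne_of_lt hji
      simp [hE, hj0, this]
  set T : Matrix (Fin (m+2)) (Fin (m+2)) ℝ :=
    fun i j => if j = 0 then (if i = 0 then (x - α * ((m:ℝ)+1)) - ((m:ℝ)+1) * (1-α) * c else 0)
      else N i j with hT
  have hNE : N * E = T := by
    ext i j
    rw [Matrix.mul_apply]
    by_cases hj : j = 0
    · subst hj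
      by_cases hi : i = 0
      · subst hi
        simp [hE, hT, hN, Fin.sum_univ_succ, Fin.succ_ne_zero, (Fin.succ_ne_zero · |>.symm),
          Finset.sum_const]
        ring
      · obtain ⟨i0, rfl⟩ : ∃ i0 : Fin (m+1), i = i0.succ := by
          rcases Fin.eq_zero_or_eq_succ i with h | h
          · exact absurd h hi
          · exact h
        simp [hE, hT, hN, Fin.sum_univ_succ, Fin.succ_ne_zero, (Fin.succ_ne_zero · |>.symm),
          Fin.succ_inj, Finset.sum_ite_eq]
        rw [hc]
        field_simp
        ring
    · simp [hE, hT, hj, Finset.sum_ite_eq', hN]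
  have hTtri : T.det = ((x - α * ((m:ℝ)+1)) - ((m:ℝ)+1) * (1-α) * c) * (x - α)^(m+1) := by
    rw [Matrix.det_of_upperTriangular]
    · rw [Fin.prod_univ_succ]
      simp only [hT, if_pos rfl]
      have : ∀ k : Fin (m+1), T k.succ k.succ = x - α := by
        intro k
        simp [hT, hN, Fin.succ_ne_zero]
      rw [Finset.prod_congr rfl (fun k _ => this k), Finset.prod_const, Finset.card_univ,
        Fintype.card_fin]
      norm_num
    · intro i j hij
      have hji : (j:ℕ) < i := hij
      have hi0 : i ≠ 0 := by
        intro h; subst h; exact absurd hji (by simp)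
      have hne : i ≠ j := (Fin.ne_of_lt hji).symm
      by_cases hj : j = 0
      · simp [hT, hj, hi0]
      · simp [hT, hj, hN, hne, hi0]
  have : N.det = T.det := by
    rw [← hNE, Matrix.det_mul, hEdet, mul_one]
  rw [this, hTtri, hc]
  field_simp
  ring

lemma sorted_aux (m : ℕ) (a b c : ℝ) (h1 : c ≤ a) (h2 : a ≤ b) :
    List.Pairwise (· ≤ ·) (c :: (List.replicate m a ++ [b])) := by
  rw [List.pairwise_cons]
  constructor
  · intro x hx
    rcases List.mem_append.mp hx with h | h
    · rw [List.eq_of_mem_replicate h]; exact h1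
    · rw [List.mem_singleton.mp h]; exact h1.trans h2
  · rw [List.pairwise_append]
    refine ⟨List.pairwise_replicate.mpr (Or.inr le_rfl), List.pairwise_singleton _ _, ?_⟩
    intro x hx y hy
    rw [List.eq_of_mem_replicate hx, List.mem_singleton.mp hy]; exact h2


/-- The `A_α`-spectrum of the star `S_n`:
`λ_1 = (αn + √(α²n² + 4(n−1)(1−2α)))/2`, `λ_n = (αn − √(α²n² + 4(n−1)(1−2α)))/2`
and `λ_k = α` for `2 ≤ k ≤ n−1`. -/
theorem Aalpha_star_spectrum (n : ℕ) [NeZero n] (hn : 2 ≤ n)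
    (α : ℝ) (hα0 : 0 ≤ α) (hα1 : α ≤ 1) :
    eigDesc (Aalpha_isHermitian α (starGraph n)) 1 =
      (α * n + Real.sqrt (α ^ 2 * n ^ 2 + 4 * (n - 1) * (1 - 2 * α))) / 2 ∧
    eigDesc (Aalpha_isHermitian α (starGraph n)) n =
      (α * n - Real.sqrt (α ^ 2 * n ^ 2 + 4 * (n - 1) * (1 - 2 * α))) / 2 ∧
    ∀ k : ℕ, 2 ≤ k → k ≤ n - 1 → eigDesc (Aalpha_isHermitian α (starGraph n)) k = α := by
  obtain ⟨m, rfl⟩ : ∃ m, n = m + 2 := ⟨n - 2, by omega⟩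
  clear hn
  set nr : ℝ := ((m + 2 : ℕ) : ℝ) with hnr
  have hnrm : nr = (m : ℝ) + 2 := by rw [hnr]; push_cast; ring
  set disc : ℝ := α ^ 2 * nr ^ 2 + 4 * (nr - 1) * (1 - 2 * α) with hdiscdef
  have hdisc : 0 ≤ disc := by
    have : disc = (α * m)^2 + 4 * ((m:ℝ)+1) * (1-α)^2 := by rw [hdiscdef, hnrm]; ring
    rw [this]; positivity
  set s : ℝ := Real.sqrt disc with hsdef
  have hs0 : 0 ≤ s := Real.sqrt_nonneg _
  have hs2 : s ^ 2 = disc := Real.sq_sqrt hdisc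
  set l1 : ℝ := (α * nr + s) / 2 with hl1
  set l2 : ℝ := (α * nr - s) / 2 with hl2
  set eig := (Aalpha_isHermitian α (starGraph (m+2))).eigenvalues with heig
  -- order facts
  have hαm : (0:ℝ) ≤ α * m := mul_nonneg hα0 (Nat.cast_nonneg m)
  have hord1 : α ≤ l1 := by rw [hl1, hnrm]; nlinarith
  have hord2 : l2 ≤ α := by
    rw [hl2, hnrm]
    have hdg : (α * m)^2 ≤ disc := by
      have : disc = (α * m)^2 + 4 * ((m:ℝ)+1) * (1-α)^2 := by rw [hdiscdef, hnrm]; ring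
      rw [this]
      nlinarith [sq_nonneg (1-α), (Nat.cast_nonneg m : (0:ℝ) ≤ (m:ℝ))]
    nlinarith
  -- quadratic identity
  have hquad : ∀ x : ℝ, (x - l1) * (x - l2) =
      (x - α) * (x - α * ((m:ℝ)+1)) - ((m:ℝ)+1) * (1-α)^2 := by
    intro x
    rw [hl1, hl2, hnrm]
    have : s^2 = α ^ 2 * ((m:ℝ)+2) ^ 2 + 4 * (((m:ℝ)+2) - 1) * (1 - 2 * α) := by
      rw [hs2, hdiscdef, hnrm]
    nlinarith [this]
  -- det identity
  have hdet : ∀ x : ℝ, x ≠ α → ∏ i, (x - eig i) = (x - α)^m * ((x - l1) * (x - l2)) := by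
    intro x hx
    rw [← detProdEig _ (Aalpha_isHermitian α (starGraph (m+2))), hquad x]
    apply star_det m α x hx
    intro i j
    rw [Matrix.sub_apply, Matrix.smul_apply, Matrix.one_apply, Aalpha_star_apply]
    push_cast
    split_ifs <;> simp_all <;> first | (left; ring) | ring
  -- polynomial identity
  classical
  set P : Polynomial ℝ := ∏ i, (Polynomial.X - Polynomial.C (eig i)) with hP
  set Q : Polynomial ℝ := (Polynomial.X - Polynomial.C α)^m *
    ((Polynomial.X - Polynomial.C l1) * (Polynomial.X - Polynomial.C l2)) with hQ
  have hPQ : P = Q := by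
    apply Polynomial.eq_of_infinite_eval_eq
    apply Set.Infinite.mono (s := {α}ᶜ)
    · intro x hx
      have hx' : x ≠ α := hx
      simp only [Set.mem_setOf_eq, hP, hQ, Polynomial.eval_prod, Polynomial.eval_mul,
        Polynomial.eval_pow, Polynomial.eval_sub, Polynomial.eval_X, Polynomial.eval_C]
      exact hdet x hx'
    · exact Set.Finite.infinite_compl (Set.finite_singleton α)
  have hProots : P.roots = Finset.univ.val.map eig := by
    have : P = ((Finset.univ.val.map eig).map fun a => Polynomial.X - Polynomial.C a).prod := by
      rw [Multiset.map_map]; rfl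
    rw [this, Polynomial.roots_multiset_prod_X_sub_C]
  have hQmonic : Q.Monic := ((Polynomial.monic_X_sub_C α).pow m).mul
    (((Polynomial.monic_X_sub_C l1)).mul (Polynomial.monic_X_sub_C l2))
  have hQroots : Q.roots = Multiset.replicate m α + ({l1} + {l2}) := by
    rw [hQ, Polynomial.roots_mul, Polynomial.roots_mul, Polynomial.roots_pow,
      Polynomial.roots_X_sub_C, Polynomial.roots_X_sub_C, Polynomial.roots_X_sub_C,
      Multiset.nsmul_singleton]
    · exact Polynomial.Monic.ne_zero
        ((Polynomial.monic_X_sub_C l1).mul (Polynomial.monic_X_sub_C l2))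
    · exact hQmonic.ne_zero
  have hmult : Finset.univ.val.map eig = Multiset.replicate m α + ({l1} + {l2}) := by
    rw [← hProots, hPQ, hQroots]
  -- sorted list
  set L : List ℝ := l2 :: (List.replicate m α ++ [l1]) with hLdef
  have hL : (Finset.univ.val.map eig).sort (· ≤ ·) = L := by
    haveI : IsAntisymm ℝ (· ≤ ·) := ⟨fun _ _ => le_antisymm⟩
    refine (fun hp h1 h2 => List.Perm.eq_of_pairwise' (r := (· ≤ ·)) h1 h2 hp) ?_ ?_ ?_
    · rw [← Multiset.coe_eq_coe, Multiset.sort_eq, hmult, hLdef]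
      have h1 : ((l2 :: (List.replicate m α ++ [l1]) : List ℝ) : Multiset ℝ)
          = l2 ::ₘ ((List.replicate m α : List ℝ) : Multiset ℝ) + (([l1] : List ℝ) : Multiset ℝ) :=
        rfl
      rw [h1, Multiset.coe_replicate, Multiset.coe_singleton, ← Multiset.singleton_add]
      abel
    · exact Multiset.pairwise_sort _ _
    · exact sorted_aux m α l1 l2 hord2 hord1
  have hgetD : ∀ k, eigDesc (Aalpha_isHermitian α (starGraph (m+2))) k = L.getD (m + 2 - k) 0 := by
    intro k
    rw [eigDesc, ← heig, hL]
  refine ⟨?_, ?_, ?_⟩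
  · rw [hgetD, hLdef]
    show (List.replicate m α ++ [l1]).getD m 0 = _
    rw [List.getD_append_right _ _ _ _ (by simp), List.length_replicate, Nat.sub_self]
    simp [hl1]
  · rw [hgetD, hLdef]
    simp [hl2]
  · intro k hk2 hk
    rw [hgetD, hLdef]
    have h1 : 1 ≤ m + 2 - k := by omega
    have h2 : m + 2 - k - 1 < m := by omega
    obtain ⟨i, hi⟩ : ∃ i, m + 2 - k = i + 1 := ⟨m + 2 - k - 1, by omega⟩
    rw [hi]
    show (List.replicate m α ++ [l1]).getD i 0 = α
    rw [List.getD_append _ _ _ _ (by simp; omega)]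
    rw [List.getD_eq_getElem _ _ (by simp; omega)]
    simp
end

section
/- If α ∈ [1/2, 1], then for any graph G the matrix A_α(G) is positive semidefinite. If moreover α ∈ (1/2, 1] and G has no isolated vertices, then A_α(G) is positive definite. -/
lemma degree_eq_sum {n : ℕ} (G : SimpleGraph (Fin n)) [DecidableRel G.Adj] (v : Fin n) :
    (G.degree v : ℝ) = ∑ u, (if G.Adj v u then (1 : ℝ) else 0) := by
  rw [SimpleGraph.degree, SimpleGraph.neighborFinset_eq_filter, Finset.card_filter]
  push_cast
  rfl

lemma quad_eq {n : ℕ} (α : ℝ) (G : SimpleGraph (Fin n)) [DecidableRel G.Adj]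
    (x : Fin n → ℝ) :
    dotProduct x ((Aalpha α G).mulVec x) =
      ∑ v, ∑ u, (if G.Adj v u then
        α / 2 * ((x v) ^ 2 + (x u) ^ 2) + (1 - α) * (x v * x u) else 0) := by
  have hswap : ∀ f : Fin n → Fin n → ℝ,
      (∑ v, ∑ u, (if G.Adj v u then f v u else 0)) =
        ∑ v, ∑ u, (if G.Adj v u then f u v else 0) := by
    intro f
    rw [Finset.sum_comm]
    refine Finset.sum_congr rfl fun u _ => Finset.sum_congr rfl fun v _ => ?_
    exact if_congr (G.adj_comm v u) rfl rfl
  have h1 : dotProduct x ((Aalpha α G).mulVec x) =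
      ∑ v, ∑ u, ((if v = u then α * (G.degree v : ℝ) * (x v * x u) else 0) +
        (if G.Adj v u then (1 - α) * (x v * x u) else 0)) := by
    simp only [dotProduct, Matrix.mulVec, Aalpha, Matrix.add_apply,
      Matrix.smul_apply, Matrix.diagonal_apply, SimpleGraph.adjMatrix_apply,
      smul_eq_mul, Finset.mul_sum]
    refine Finset.sum_congr rfl fun v _ => Finset.sum_congr rfl fun u _ => ?_
    by_cases h : v = u <;> by_cases ha : G.Adj v u <;> simp [h, ha] <;> ring
  have h2 : ∀ v : Fin n,
      (∑ u, ((if v = u then α * (G.degree v : ℝ) * (x v * x u) else 0) +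
        (if G.Adj v u then (1 - α) * (x v * x u) else 0))) =
      ∑ u, (if G.Adj v u then α * (x v) ^ 2 + (1 - α) * (x v * x u) else 0) := by
    intro v
    rw [Finset.sum_add_distrib, Finset.sum_ite_eq Finset.univ v
      (fun u => α * (G.degree v : ℝ) * (x v * x u))]
    simp only [Finset.mem_univ, if_true]
    have : α * (G.degree v : ℝ) * (x v * x v) =
        ∑ u, (if G.Adj v u then α * (x v) ^ 2 else 0) := by
      rw [degree_eq_sum G v, Finset.mul_sum, Finset.sum_mul]
      refine Finset.sum_congr rfl fun u _ => ?_
      by_cases h : G.Adj v u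
      · rw [if_pos h, if_pos h]; ring
      · rw [if_neg h, if_neg h]; ring
    rw [this, ← Finset.sum_add_distrib]
    refine Finset.sum_congr rfl fun u _ => ?_
    by_cases h : G.Adj v u <;> simp [h]
  have h3 : (∑ v, ∑ u, (if G.Adj v u then α * (x v) ^ 2 + (1 - α) * (x v * x u) else 0)) =
      ∑ v, ∑ u, (if G.Adj v u then
        α / 2 * ((x v) ^ 2 + (x u) ^ 2) + (1 - α) * (x v * x u) else 0) := by
    have key : (∑ v, ∑ u, (if G.Adj v u then α / 2 * (x v) ^ 2 else 0)) =
        ∑ v, ∑ u, (if G.Adj v u then α / 2 * (x u) ^ 2 else 0) :=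
      hswap (fun v _ => α / 2 * (x v) ^ 2)
    have e1 : ∀ v u : Fin n,
        (if G.Adj v u then α * (x v) ^ 2 + (1 - α) * (x v * x u) else 0) =
        (if G.Adj v u then α / 2 * (x v) ^ 2 else 0) +
        ((if G.Adj v u then α / 2 * (x v) ^ 2 else 0) +
          (if G.Adj v u then (1 - α) * (x v * x u) else 0)) := by
      intro v u; by_cases h : G.Adj v u <;> simp [h] <;> ring
    have e2 : ∀ v u : Fin n,
        (if G.Adj v u then α / 2 * ((x v) ^ 2 + (x u) ^ 2) + (1 - α) * (x v * x u) else 0) =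
        (if G.Adj v u then α / 2 * (x u) ^ 2 else 0) +
        ((if G.Adj v u then α / 2 * (x v) ^ 2 else 0) +
          (if G.Adj v u then (1 - α) * (x v * x u) else 0)) := by
      intro v u; by_cases h : G.Adj v u <;> simp [h] <;> ring
    simp only [e1, e2, Finset.sum_add_distrib, key]
  rw [h1]
  rw [Finset.sum_congr rfl fun v _ => h2 v, h3]

/-- If `α ∈ [1/2, 1]` then `A_α(G)` is positive semidefinite; if moreover `α ∈ (1/2, 1]`
and `G` has no isolated vertices, then `A_α(G)` is positive definite. -/
theorem Aalpha_posSemidef_posDef (n : ℕ) (G : SimpleGraph (Fin n)) [DecidableRel G.Adj]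
    (α : ℝ) (hα0 : 1 / 2 ≤ α) (hα1 : α ≤ 1) :
    (Aalpha α G).PosSemidef ∧
    ((1 / 2 < α ∧ ∀ v : Fin n, 0 < G.degree v) → (Aalpha α G).PosDef) := by
  have hterm : ∀ (x : Fin n → ℝ) (v u : Fin n), 0 ≤
      (if G.Adj v u then α / 2 * ((x v) ^ 2 + (x u) ^ 2) + (1 - α) * (x v * x u) else 0) := by
    intro x v u
    by_cases h : G.Adj v u
    · simp only [h, if_true]
      nlinarith [sq_nonneg (x v + x u), sq_nonneg (x v - x u), sq_nonneg (x v), sq_nonneg (x u)]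
    · simp [h]
  constructor
  · refine Matrix.posSemidef_iff_dotProduct_mulVec.mpr ⟨Aalpha_isHermitian α G, fun x => ?_⟩
    rw [show star x = x from rfl, quad_eq]
    exact Finset.sum_nonneg fun v _ => Finset.sum_nonneg fun u _ => hterm x v u
  · rintro ⟨hα, hdeg⟩
    refine Matrix.posDef_iff_dotProduct_mulVec.mpr ⟨Aalpha_isHermitian α G, fun x hx => ?_⟩
    rw [show star x = x from rfl, quad_eq]
    obtain ⟨v, hv⟩ : ∃ v, x v ≠ 0 := by
      by_contra h; push_neg at h; exact hx (funext h)
    obtain ⟨u, hu⟩ : ∃ u, G.Adj v u := by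
      have := hdeg v
      rw [← SimpleGraph.card_neighborFinset_eq_degree, Finset.card_pos] at this
      obtain ⟨u, hu⟩ := this
      exact ⟨u, (SimpleGraph.mem_neighborFinset G v u).mp hu⟩
    refine Finset.sum_pos' (fun w _ => Finset.sum_nonneg fun z _ => hterm x w z)
      ⟨v, Finset.mem_univ v, Finset.sum_pos' (fun z _ => hterm x v z)
        ⟨u, Finset.mem_univ u, ?_⟩⟩
    simp only [hu, if_true]
    have hv2 : 0 < (x v) ^ 2 := by positivity
    nlinarith [sq_nonneg (x v + x u), sq_nonneg (x v - x u), sq_nonneg (x u)]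
end

section
/- Let G be a connected graph of order n ≥ 3 with p pendant vertices, and α ∈ [0,1]. Then A_α(G) has at least p eigenvalues ≥ α and at least p eigenvalues ≤ α (counting multiplicity). -/
section Aux

open Finset Matrix

variable {n : ℕ}

private lemma Aalpha.dot_mulVec_eq_inner (A : Matrix (Fin n) (Fin n) ℝ)
    (x : EuclideanSpace ℝ (Fin n)) :
    (x : Fin n → ℝ) ⬝ᵥ (A *ᵥ x) = inner ℝ x (Matrix.toEuclideanLin A x) := by
  simp only [PiLp.inner_apply, dotProduct, Matrix.toEuclideanLin_apply, RCLike.inner_apply,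
    starRingEnd_apply, star_trivial]
  exact Finset.sum_congr rfl fun i _ => mul_comm _ _

private lemma Aalpha.dot_self_eq_inner (x : EuclideanSpace ℝ (Fin n)) :
    (x : Fin n → ℝ) ⬝ᵥ x = inner ℝ x x := by
  simp only [PiLp.inner_apply, dotProduct, RCLike.inner_apply, starRingEnd_apply, star_trivial]

private lemma Aalpha.quad_repr (A : Matrix (Fin n) (Fin n) ℝ) {ι : Type*} [Fintype ι]
    (f : ι → EuclideanSpace ℝ (Fin n)) (hf : Orthonormal ℝ f) (c : ι → ℝ)
    (x : EuclideanSpace ℝ (Fin n)) (hx : ∑ i, c i • f i = x) :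
    (x : Fin n → ℝ) ⬝ᵥ (A *ᵥ x) =
      ∑ i, ∑ j, c i * c j * inner ℝ (f i) (Matrix.toEuclideanLin A (f j)) ∧
    (x : Fin n → ℝ) ⬝ᵥ x = ∑ i, c i ^ 2 ∧ (x ≠ 0 → ∃ i, c i ≠ 0) := by
  subst hx
  refine ⟨?_, ?_, ?_⟩
  · rw [Aalpha.dot_mulVec_eq_inner, map_sum, sum_inner]
    refine Finset.sum_congr rfl fun i _ => ?_
    rw [inner_smul_left, inner_sum, Finset.mul_sum]
    refine Finset.sum_congr rfl fun j _ => ?_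
    rw [_root_.map_smul, inner_smul_right]
    simp [starRingEnd_apply]
    ring
  · rw [Aalpha.dot_self_eq_inner, sum_inner]
    refine Finset.sum_congr rfl fun i _ => ?_
    rw [inner_smul_left, hf.inner_right_fintype]
    simp [starRingEnd_apply]
    ring
  · intro hx
    by_contra h
    push_neg at h
    exact hx (by simp [h])

private lemma Aalpha.core_disjoint (A : Matrix (Fin n) (Fin n) ℝ) (α : ℝ)
    (W V : Submodule ℝ (EuclideanSpace ℝ (Fin n)))
    (hW : ∀ x ∈ W, (x : Fin n → ℝ) ⬝ᵥ (A *ᵥ x) = α * ((x : Fin n → ℝ) ⬝ᵥ x))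
    (hV : ∀ x ∈ V, x ≠ 0 → (x : Fin n → ℝ) ⬝ᵥ (A *ᵥ x) ≠ α * ((x : Fin n → ℝ) ⬝ᵥ x)) :
    Module.finrank ℝ W + Module.finrank ℝ V ≤ n := by
  have hd : Disjoint W V := by
    rw [Submodule.disjoint_def]
    intro x hxW hxV
    by_contra hx
    exact hV x hxV hx (hW x hxW)
  have h := Submodule.finrank_add_finrank_le_of_disjoint hd
  simpa [finrank_euclideanSpace] using h

private lemma Aalpha.eigen_span_strict (A : Matrix (Fin n) (Fin n) ℝ) (hA : A.IsHermitian)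
    (α : ℝ) (S : Finset (Fin n))
    (hS : (∀ i ∈ S, hA.eigenvalues i < α) ∨ (∀ i ∈ S, α < hA.eigenvalues i)) :
    ∃ V : Submodule ℝ (EuclideanSpace ℝ (Fin n)),
      Module.finrank ℝ V = S.card ∧
      ∀ x ∈ V, x ≠ 0 →
        (x : Fin n → ℝ) ⬝ᵥ (A *ᵥ x) ≠ α * ((x : Fin n → ℝ) ⬝ᵥ x) := by
  set f : S → EuclideanSpace ℝ (Fin n) := fun i => hA.eigenvectorBasis (i : Fin n) with hfdef
  have hf : Orthonormal ℝ f :=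
    hA.eigenvectorBasis.orthonormal.comp _ Subtype.val_injective
  refine ⟨Submodule.span ℝ (Set.range f), ?_, ?_⟩
  · rw [finrank_span_eq_card hf.linearIndependent, Fintype.card_coe]
  · intro x hx hx0
    rw [Submodule.mem_span_range_iff_exists_fun] at hx
    obtain ⟨c, hc⟩ := hx
    obtain ⟨hQ, hN, hc0⟩ := Aalpha.quad_repr A f hf c x hc
    have hLf : ∀ j : S, Matrix.toEuclideanLin A (f j) =
        hA.eigenvalues (j : Fin n) • f j := fun j => by
          simpa [Matrix.toEuclideanLin_apply, hfdef] using
            congrArg (WithLp.toLp 2) (hA.mulVec_eigenvectorBasis j)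
    have hinner : ∀ i j : S, (inner ℝ (f i) (Matrix.toEuclideanLin A (f j)) : ℝ) =
        if i = j then hA.eigenvalues (j : Fin n) else 0 := by
      intro i j
      rw [hLf, inner_smul_right, orthonormal_iff_ite.mp hf i j]
      split <;> simp
    have hQ' : (x : Fin n → ℝ) ⬝ᵥ (A *ᵥ x) =
        ∑ i : S, hA.eigenvalues (i : Fin n) * c i ^ 2 := by
      rw [hQ]
      refine Finset.sum_congr rfl fun i _ => ?_
      rw [Finset.sum_eq_single i]
      · rw [hinner, if_pos rfl]; ring
      · intro j _ hj; rw [hinner, if_neg (Ne.symm hj), mul_zero]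
      · intro h; exact absurd (Finset.mem_univ i) h
    obtain ⟨i0, hi0⟩ := hc0 hx0
    have hsum : α * ((x : Fin n → ℝ) ⬝ᵥ x) = ∑ i : S, α * c i ^ 2 := by
      rw [hN, Finset.mul_sum]
    rcases hS with hS | hS
    · have hlt : ∑ i : S, hA.eigenvalues (i : Fin n) * c i ^ 2 < ∑ i : S, α * c i ^ 2 := by
        refine Finset.sum_lt_sum (fun i _ => ?_) ⟨i0, Finset.mem_univ i0, ?_⟩
        · exact mul_le_mul_of_nonneg_right (le_of_lt (hS i i.2)) (sq_nonneg _)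
        · exact mul_lt_mul_of_pos_right (hS i0 i0.2) (sq_pos_of_ne_zero hi0)
      rw [hQ', hsum]; exact ne_of_lt hlt
    · have hlt : ∑ i : S, α * c i ^ 2 < ∑ i : S, hA.eigenvalues (i : Fin n) * c i ^ 2 := by
        refine Finset.sum_lt_sum (fun i _ => ?_) ⟨i0, Finset.mem_univ i0, ?_⟩
        · exact mul_le_mul_of_nonneg_right (le_of_lt (hS i i.2)) (sq_nonneg _)
        · exact mul_lt_mul_of_pos_right (hS i0 i0.2) (sq_pos_of_ne_zero hi0)
      rw [hQ', hsum]; exact (ne_of_lt hlt).symm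

private lemma Aalpha.pendant_span (A : Matrix (Fin n) (Fin n) ℝ) (α : ℝ) (P : Finset (Fin n))
    (hdiag : ∀ v ∈ P, A v v = α) (hoff : ∀ v ∈ P, ∀ w ∈ P, v ≠ w → A v w = 0) :
    ∃ W : Submodule ℝ (EuclideanSpace ℝ (Fin n)),
      Module.finrank ℝ W = P.card ∧
      ∀ x ∈ W, (x : Fin n → ℝ) ⬝ᵥ (A *ᵥ x) = α * ((x : Fin n → ℝ) ⬝ᵥ x) := by
  set f : P → EuclideanSpace ℝ (Fin n) :=
    fun v => EuclideanSpace.single (v : Fin n) (1 : ℝ) with hfdef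
  have hf : Orthonormal ℝ f :=
    (EuclideanSpace.orthonormal_single (𝕜 := ℝ) (ι := Fin n)).comp _ Subtype.val_injective
  refine ⟨Submodule.span ℝ (Set.range f), ?_, ?_⟩
  · rw [finrank_span_eq_card hf.linearIndependent, Fintype.card_coe]
  · intro x hx
    rw [Submodule.mem_span_range_iff_exists_fun] at hx
    obtain ⟨c, hc⟩ := hx
    obtain ⟨hQ, hN, -⟩ := Aalpha.quad_repr A f hf c x hc
    have hinner : ∀ v w : P, (inner ℝ (f v) (Matrix.toEuclideanLin A (f w)) : ℝ) =
        A (v : Fin n) (w : Fin n) := by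
      intro v w
      rw [hfdef]
      rw [EuclideanSpace.inner_single_left]
      simp [Matrix.toEuclideanLin_apply, Matrix.mulVec, dotProduct,
        EuclideanSpace.single_apply]
    rw [hQ, hN, Finset.mul_sum]
    refine Finset.sum_congr rfl fun v _ => ?_
    rw [Finset.sum_eq_single v]
    · rw [hinner, hdiag _ v.2]; ring
    · intro w _ hw
      rw [hinner, hoff _ v.2 _ w.2 (fun h => hw (Subtype.ext h.symm)), mul_zero]
    · intro h; exact absurd (Finset.mem_univ v) h

private lemma Aalpha.count_key (A : Matrix (Fin n) (Fin n) ℝ) (hA : A.IsHermitian) (α : ℝ)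
    (P : Finset (Fin n)) (hdiag : ∀ v ∈ P, A v v = α)
    (hoff : ∀ v ∈ P, ∀ w ∈ P, v ≠ w → A v w = 0) :
    P.card ≤ (univ.filter fun i => α ≤ hA.eigenvalues i).card ∧
    P.card ≤ (univ.filter fun i => hA.eigenvalues i ≤ α).card := by
  obtain ⟨W, hWrank, hWq⟩ := Aalpha.pendant_span A α P hdiag hoff
  constructor
  · obtain ⟨V, hVrank, hVq⟩ := Aalpha.eigen_span_strict A hA α
      (univ.filter fun i => hA.eigenvalues i < α)
      (Or.inl fun i hi => (Finset.mem_filter.mp hi).2)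
    have h := Aalpha.core_disjoint A α W V hWq hVq
    rw [hWrank, hVrank] at h
    have hsplit := Finset.card_filter_add_card_filter_not
      (s := (univ : Finset (Fin n))) (p := fun i => α ≤ hA.eigenvalues i)
    simp only [not_le, Finset.card_univ, Fintype.card_fin] at hsplit
    omega
  · obtain ⟨V, hVrank, hVq⟩ := Aalpha.eigen_span_strict A hA α
      (univ.filter fun i => α < hA.eigenvalues i)
      (Or.inr fun i hi => (Finset.mem_filter.mp hi).2)
    have h := Aalpha.core_disjoint A α W V hWq hVq
    rw [hWrank, hVrank] at h
    have hsplit := Finset.card_filter_add_card_filter_not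
      (s := (univ : Finset (Fin n))) (p := fun i => hA.eigenvalues i ≤ α)
    simp only [not_le, Finset.card_univ, Fintype.card_fin] at hsplit
    omega

private lemma Aalpha.pendant_nonadj (hn : 3 ≤ n) (G : SimpleGraph (Fin n))
    [DecidableRel G.Adj] (hconn : G.Connected) {v w : Fin n}
    (hv : G.degree v = 1) (hw : G.degree w = 1) (hvw : v ≠ w) : ¬ G.Adj v w := by
  intro hadj
  have hNv : G.neighborFinset v = {w} := by
    obtain ⟨a, ha⟩ := Finset.card_eq_one.mp hv
    have : w ∈ G.neighborFinset v := (SimpleGraph.mem_neighborFinset _ _ _).mpr hadj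
    rw [ha] at this ⊢
    rw [Finset.mem_singleton] at this
    rw [this]
  have hNw : G.neighborFinset w = {v} := by
    obtain ⟨a, ha⟩ := Finset.card_eq_one.mp hw
    have : v ∈ G.neighborFinset w := (SimpleGraph.mem_neighborFinset _ _ _).mpr hadj.symm
    rw [ha] at this ⊢
    rw [Finset.mem_singleton] at this
    rw [this]
  have hkey : ∀ (a b : Fin n), G.Walk a b → (a = v ∨ a = w) → (b = v ∨ b = w) := by
    intro a b q
    induction q with
    | nil => exact id
    | cons h q ih =>
      intro hx
      apply ih
      rcases hx with rfl | rfl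
      · right
        have hm : _ ∈ G.neighborFinset _ := (SimpleGraph.mem_neighborFinset _ _ _).mpr h
        rw [hNv] at hm
        exact Finset.mem_singleton.mp hm
      · left
        have hm : _ ∈ G.neighborFinset _ := (SimpleGraph.mem_neighborFinset _ _ _).mpr h
        rw [hNw] at hm
        exact Finset.mem_singleton.mp hm
  have hthird : ∃ u : Fin n, u ≠ v ∧ u ≠ w := by
    by_contra h
    push_neg at h
    have hsub : (univ : Finset (Fin n)) ⊆ {v, w} := by
      intro u _
      rcases Classical.em (u = v) with rfl | hu
      · simp
      · simp [h u hu]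
    have hcard := Finset.card_le_card hsub
    simp only [Finset.card_univ, Fintype.card_fin] at hcard
    have h2 : ({v, w} : Finset (Fin n)).card ≤ 2 :=
      (Finset.card_insert_le _ _).trans (by simp)
    omega
  obtain ⟨u, hu1, hu2⟩ := hthird
  obtain ⟨q⟩ := hconn.preconnected v u
  rcases hkey v u q (Or.inl rfl) with h | h
  · exact hu1 h
  · exact hu2 h

end Aux

open Finset in
/-- If `G` is connected of order `n ≥ 3` with `p` pendant vertices and `α ∈ [0,1]`,
then `A_α(G)` has at least `p` eigenvalues `≥ α` and at least `p` eigenvalues `≤ α`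
(with multiplicity). -/
theorem Aalpha_pendant_eigenvalue_count (n : ℕ) (hn : 3 ≤ n)
    (G : SimpleGraph (Fin n)) [DecidableRel G.Adj] (hconn : G.Connected)
    (α : ℝ) (hα0 : 0 ≤ α) (hα1 : α ≤ 1) :
    (univ.filter fun v : Fin n => G.degree v = 1).card ≤
      (univ.filter fun i : Fin n => α ≤ (Aalpha_isHermitian α G).eigenvalues i).card ∧
    (univ.filter fun v : Fin n => G.degree v = 1).card ≤
      (univ.filter fun i : Fin n => (Aalpha_isHermitian α G).eigenvalues i ≤ α).card := by
  apply Aalpha.count_key (Aalpha α G) (Aalpha_isHermitian α G) α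
    (univ.filter fun v : Fin n => G.degree v = 1)
  · intro v hv
    rw [Finset.mem_filter] at hv
    simp [Aalpha, Matrix.add_apply, Matrix.diagonal_apply_eq, hv.2]
  · intro v hv w hw hvw
    rw [Finset.mem_filter] at hv hw
    have hna := Aalpha.pendant_nonadj hn G hconn hv.2 hw.2 hvw
    simp [Aalpha, Matrix.add_apply, Matrix.diagonal_apply_ne _ hvw, hna]
end

section
/- If G is a connected graph of order n ≥ 3 with p pendant vertices, then the signless Laplacian Q(G) = D(G) + A(G) has at least p eigenvalues in [0,1] and at least p eigenvalues in [1, 2Δ(G)], counted with multiplicity. -/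
/-- The signless Laplacian `Q(G) = D(G) + A(G)`. -/
noncomputable def signlessLaplacian {n : ℕ} (G : SimpleGraph (Fin n)) [DecidableRel G.Adj] :
    Matrix (Fin n) (Fin n) ℝ :=
  Matrix.diagonal (fun v => (G.degree v : ℝ)) + G.adjMatrix ℝ

lemma signlessLaplacian_isHermitian {n : ℕ} (G : SimpleGraph (Fin n))
    [DecidableRel G.Adj] : (signlessLaplacian G).IsHermitian := by
  apply Matrix.IsHermitian.ext
  intro i j
  by_cases h : G.Adj i j <;> by_cases hij : i = j <;>
    simp_all [signlessLaplacian, Matrix.diagonal_apply, SimpleGraph.adj_comm, eq_comm]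

open Matrix Finset in
private lemma slq_star_real {n : ℕ} (U : Matrix (Fin n) (Fin n) ℝ) : star U = Uᵀ := by
  rw [Matrix.star_eq_conjTranspose, Matrix.conjTranspose_eq_transpose_of_trivial]

open Matrix Finset in
private lemma slq_quad_eq {n : ℕ} (A : Matrix (Fin n) (Fin n) ℝ) (hA : A.IsHermitian)
    (x : Fin n → ℝ) :
    x ⬝ᵥ (A *ᵥ x) = ∑ i, hA.eigenvalues i *
      ((star (hA.eigenvectorUnitary : Matrix (Fin n) (Fin n) ℝ) *ᵥ x) i)^2 := by
  set U : Matrix (Fin n) (Fin n) ℝ := (hA.eigenvectorUnitary : Matrix (Fin n) (Fin n) ℝ) with hUdef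
  set y := star U *ᵥ x with hy
  nth_rewrite 1 [hA.spectral_theorem]
  rw [Unitary.conjStarAlgAut_apply]
  rw [← mulVec_mulVec, ← mulVec_mulVec, dotProduct_mulVec x U]
  have hvm : x ᵥ* U = y := by rw [hy, slq_star_real U, ← vecMul_transpose, transpose_transpose]
  rw [hvm, ← hy]
  simp only [dotProduct, mulVec_diagonal, Function.comp, RCLike.ofReal_real_eq_id, id_eq]
  exact Finset.sum_congr rfl fun i _ => by ring

open Matrix Finset in
private lemma slq_norm_eq {n : ℕ} (A : Matrix (Fin n) (Fin n) ℝ) (hA : A.IsHermitian)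
    (x : Fin n → ℝ) :
    x ⬝ᵥ x = ∑ i, ((star (hA.eigenvectorUnitary : Matrix (Fin n) (Fin n) ℝ) *ᵥ x) i)^2 := by
  set U : Matrix (Fin n) (Fin n) ℝ := (hA.eigenvectorUnitary : Matrix (Fin n) (Fin n) ℝ) with hUdef
  have h1 : U * star U = 1 := Unitary.coe_mul_star_self hA.eigenvectorUnitary
  calc x ⬝ᵥ x = x ⬝ᵥ ((U * star U) *ᵥ x) := by rw [h1, one_mulVec]
    _ = ∑ i, ((star U *ᵥ x) i)^2 := by
        rw [← mulVec_mulVec, dotProduct_mulVec x U,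
          show x ᵥ* U = star U *ᵥ x by rw [slq_star_real U, ← vecMul_transpose,
            transpose_transpose]]
        simp [dotProduct, sq]

open Matrix Finset in
private lemma slq_eval_bounds {n : ℕ} (G : SimpleGraph (Fin n)) [DecidableRel G.Adj]
    (hA : (signlessLaplacian G).IsHermitian) (i : Fin n) :
    0 ≤ hA.eigenvalues i ∧ hA.eigenvalues i ≤ 2 * (G.maxDegree : ℝ) := by
  have hev : Module.End.HasEigenvalue (Matrix.toLin' (signlessLaplacian G)) (hA.eigenvalues i) := by
    apply Module.End.hasEigenvalue_of_hasEigenvector (x := ⇑(hA.eigenvectorBasis i))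
    constructor
    · rw [Module.End.mem_eigenspace_iff]
      simpa [Matrix.toLin'_apply] using hA.mulVec_eigenvectorBasis i
    · intro h
      have := hA.eigenvectorBasis.orthonormal.1 i
      rw [show (hA.eigenvectorBasis i) = 0 from ?_] at this
      · simp at this
      · ext j; exact congrFun h j
  obtain ⟨k, hk⟩ := eigenvalue_mem_ball hev
  rw [Metric.mem_closedBall, Real.dist_eq] at hk
  have hdiag : signlessLaplacian G k k = (G.degree k : ℝ) := by
    simp [signlessLaplacian]
  have hrow : ∑ j ∈ Finset.univ.erase k, ‖signlessLaplacian G k j‖ = (G.degree k : ℝ) := by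
    have : ∀ j ∈ Finset.univ.erase k, ‖signlessLaplacian G k j‖ = G.adjMatrix ℝ k j := by
      intro j hj
      have hjk : j ≠ k := (Finset.mem_erase.mp hj).1
      simp [signlessLaplacian, Matrix.diagonal_apply, hjk.symm]
      split <;> simp
    rw [Finset.sum_congr rfl this, Finset.sum_erase _ (by simp)]
    rw [show ∑ j, G.adjMatrix ℝ k j = ∑ j, if G.Adj k j then (1:ℝ) else 0 from
      Finset.sum_congr rfl fun j _ => by simp [SimpleGraph.adjMatrix_apply]]
    rw [Finset.sum_boole]
    have : Finset.univ.filter (fun w => G.Adj k w) = G.neighborFinset k := by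
      ext w; simp
    rw [this]
    rfl
  rw [hdiag, hrow] at hk
  have habs := abs_le.mp hk
  have hd : (G.degree k : ℝ) ≤ (G.maxDegree : ℝ) := by
    exact_mod_cast G.degree_le_maxDegree k
  constructor
  · linarith [habs.1]
  · linarith [habs.2]

open Matrix Finset in
private lemma slq_no_pendant_adj {n : ℕ} (G : SimpleGraph (Fin n)) [DecidableRel G.Adj]
    (hn : 3 ≤ n) (hconn : G.Connected) {u v : Fin n} (hu : G.degree u = 1)
    (hv : G.degree v = 1) (hadj : G.Adj u v) : False := by
  have hNu : G.neighborFinset u = {v} := by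
    apply Finset.eq_singleton_iff_unique_mem.mpr
    refine ⟨by simpa using hadj, ?_⟩
    intro w hw
    obtain ⟨a, ha⟩ := Finset.card_eq_one.mp hu
    rw [ha] at hw
    have hv' : v ∈ ({a} : Finset (Fin n)) := by rw [← ha]; simpa using hadj
    simp_all
  have hNv : G.neighborFinset v = {u} := by
    apply Finset.eq_singleton_iff_unique_mem.mpr
    refine ⟨by simpa using hadj.symm, ?_⟩
    intro w hw
    obtain ⟨a, ha⟩ := Finset.card_eq_one.mp hv
    rw [ha] at hw
    have hu' : u ∈ ({a} : Finset (Fin n)) := by rw [← ha]; simpa using hadj.symm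
    simp_all
  have key : ∀ (s w : Fin n), G.Walk s w → s = u ∨ s = v → w = u ∨ w = v := by
    intro s w W
    induction W with
    | nil => exact id
    | cons h W ih =>
      rename_i a b c
      intro hs
      apply ih
      rcases hs with rfl | rfl
      · have : b ∈ G.neighborFinset a := by simpa using h
        rw [hNu] at this; right; simpa using this
      · have : b ∈ G.neighborFinset a := by simpa using h
        rw [hNv] at this; left; simpa using this
  have h3 : ∃ w : Fin n, w ≠ u ∧ w ≠ v := by
    by_contra hc
    push_neg at hc
    have : (Finset.univ : Finset (Fin n)).card ≤ ({u, v} : Finset (Fin n)).card := by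
      apply Finset.card_le_card
      intro w _
      rcases eq_or_ne w u with rfl | hne
      · simp
      · simp [hc w hne]
    have hcard : ({u, v} : Finset (Fin n)).card ≤ 2 := Finset.card_insert_le _ _ |>.trans (by simp)
    simp [Finset.card_univ] at this
    omega
  obtain ⟨w, hwu, hwv⟩ := h3
  obtain ⟨W⟩ := hconn.preconnected u w
  rcases key u w W (Or.inl rfl) with h | h
  · exact hwu h
  · exact hwv h

open Matrix Finset in
private lemma slq_kernel_exists {n : ℕ} (M : Matrix (Fin n) (Fin n) ℝ) (P S : Finset (Fin n))
    (hcard : S.card < P.card) :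
    ∃ x : Fin n → ℝ, x ≠ 0 ∧ (∀ v, x v ≠ 0 → v ∈ P) ∧ ∀ i ∈ S, (M *ᵥ x) i = 0 := by
  classical
  let ext : ({v // v ∈ P} → ℝ) →ₗ[ℝ] (Fin n → ℝ) :=
    Function.ExtendByZero.linearMap ℝ (Subtype.val : {v // v ∈ P} → Fin n)
  let L : ({v // v ∈ P} → ℝ) →ₗ[ℝ] ({i // i ∈ S} → ℝ) :=
    (LinearMap.funLeft ℝ ℝ (Subtype.val : {i // i ∈ S} → Fin n)) ∘ₗ M.mulVecLin ∘ₗ ext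
  have hni : ¬ Function.Injective L := by
    intro hinj
    have := LinearMap.finrank_le_finrank_of_injective hinj
    simp only [Module.finrank_fintype_fun_eq_card, Fintype.card_coe] at this
    omega
  rw [Function.not_injective_iff] at hni
  obtain ⟨a, b, hab, hne⟩ := hni
  set c := a - b with hc
  have hc0 : c ≠ 0 := sub_ne_zero.mpr hne
  have hLc : L c = 0 := by rw [hc, map_sub, hab, sub_self]
  refine ⟨ext c, ?_, ?_, ?_⟩
  · intro h
    apply hc0
    ext ⟨v, hv⟩
    have := congrFun h v
    rwa [show ext c v = c ⟨v, hv⟩ from ?_] at this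
    simp only [ext, Function.ExtendByZero.linearMap_apply]
    exact Function.Injective.extend_apply Subtype.val_injective c 0 ⟨v, hv⟩
  · intro v hv
    by_contra hvP
    apply hv
    simp only [ext, Function.ExtendByZero.linearMap_apply]
    rw [Function.extend_apply']
    · rfl
    · rintro ⟨⟨w, hw⟩, rfl⟩
      exact hvP hw
  · intro i hi
    have := congrFun hLc ⟨i, hi⟩
    simpa [L, LinearMap.funLeft] using this

open Matrix Finset in
private lemma slq_pendant_quad {n : ℕ} (G : SimpleGraph (Fin n)) [DecidableRel G.Adj]
    (hn : 3 ≤ n) (hconn : G.Connected) (x : Fin n → ℝ)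
    (hsupp : ∀ v, x v ≠ 0 → G.degree v = 1) :
    x ⬝ᵥ (signlessLaplacian G *ᵥ x) = x ⬝ᵥ x := by
  unfold signlessLaplacian
  rw [add_mulVec, dotProduct_add]
  have h1 : x ⬝ᵥ (Matrix.diagonal (fun v => (G.degree v : ℝ)) *ᵥ x) = x ⬝ᵥ x := by
    simp only [dotProduct, mulVec_diagonal]
    apply Finset.sum_congr rfl
    intro v _
    rcases eq_or_ne (x v) 0 with h | h
    · simp [h]
    · rw [hsupp v h]; push_cast; ring
  have h2 : x ⬝ᵥ (G.adjMatrix ℝ *ᵥ x) = 0 := by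
    simp only [dotProduct, mulVec]
    apply Finset.sum_eq_zero
    intro v _
    rcases eq_or_ne (x v) 0 with h | h
    · simp [h]
    · have hz : ∑ u, G.adjMatrix ℝ v u * x u = 0 := by
        apply Finset.sum_eq_zero
        intro u _
        rcases eq_or_ne (x u) 0 with h' | h'
        · simp [h']
        · suffices hna : ¬ G.Adj v u by simp [SimpleGraph.adjMatrix_apply, hna]
          intro hadj
          exact slq_no_pendant_adj G hn hconn (hsupp v h) (hsupp u h') hadj
      rw [hz, mul_zero]
  rw [h1, h2, add_zero]

open Finset in
/-- If `G` is connected of order `n ≥ 3` with `p` pendant vertices, then `Q(G)` has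
at least `p` eigenvalues in `[0, 1]` and at least `p` eigenvalues in `[1, 2Δ(G)]`
(with multiplicity). -/
theorem signlessLaplacian_pendant_eigenvalue_count (n : ℕ) (hn : 3 ≤ n)
    (G : SimpleGraph (Fin n)) [DecidableRel G.Adj] (hconn : G.Connected) :
    (univ.filter fun v : Fin n => G.degree v = 1).card ≤
      (univ.filter fun i : Fin n =>
        0 ≤ (signlessLaplacian_isHermitian G).eigenvalues i ∧
        (signlessLaplacian_isHermitian G).eigenvalues i ≤ 1).card ∧
    (univ.filter fun v : Fin n => G.degree v = 1).card ≤
      (univ.filter fun i : Fin n =>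
        1 ≤ (signlessLaplacian_isHermitian G).eigenvalues i ∧
        (signlessLaplacian_isHermitian G).eigenvalues i ≤ 2 * (G.maxDegree : ℝ)).card := by
  classical
  set hA := signlessLaplacian_isHermitian G with hhA
  set ev := hA.eigenvalues with hev
  set P : Finset (Fin n) := univ.filter fun v : Fin n => G.degree v = 1 with hP
  have hsupp_mem : ∀ v ∈ P, G.degree v = 1 := fun v hv => (Finset.mem_filter.mp hv).2
  -- the generic contradiction machinery
  have main : ∀ (S : Finset (Fin n)), S.card < P.card →
      ∃ x : Fin n → ℝ, ∃ y : Fin n → ℝ,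
        (∑ i, ev i * (y i)^2 = ∑ i, (y i)^2) ∧ (∀ i ∈ S, y i = 0) ∧
        (∃ i₀, y i₀ ≠ 0) := by
    intro S hS
    obtain ⟨x, hx0, hxP, hxS⟩ :=
      slq_kernel_exists (star (hA.eigenvectorUnitary : Matrix (Fin n) (Fin n) ℝ)) P S hS
    set y := Matrix.mulVec (star (hA.eigenvectorUnitary : Matrix (Fin n) (Fin n) ℝ)) x with hy
    have hq := slq_quad_eq _ hA x
    have hnorm := slq_norm_eq _ hA x
    have hpq := slq_pendant_quad G hn hconn x (fun v hv => hsupp_mem v (hxP v hv))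
    rw [← hy] at hq hnorm
    refine ⟨x, y, by rw [← hq, ← hnorm, hpq], hxS, ?_⟩
    by_contra hally
    push_neg at hally
    apply hx0
    have hxx : dotProduct x x = 0 := by
      rw [hnorm]
      exact Finset.sum_eq_zero fun i _ => by rw [hally i]; ring
    rw [dotProduct] at hxx
    ext v
    have := Finset.sum_eq_zero_iff_of_nonneg (fun i _ => mul_self_nonneg (x i)) |>.mp hxx v
      (Finset.mem_univ v)
    have := mul_self_eq_zero.mp this
    simpa using this
  constructor
  · -- at least p eigenvalues ≤ 1 (and all are ≥ 0)
    have hfe : (univ.filter fun i : Fin n => 0 ≤ ev i ∧ ev i ≤ 1) =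
        (univ.filter fun i : Fin n => ev i ≤ 1) := by
      apply Finset.filter_congr
      intro i _
      exact ⟨fun h => h.2, fun h => ⟨(slq_eval_bounds G hA i).1, h⟩⟩
    rw [hfe]
    by_contra hlt
    push_neg at hlt
    obtain ⟨x, y, heq, hyS, i₀, hi₀⟩ := main _ hlt
    have hi₀S : i₀ ∉ univ.filter fun i : Fin n => ev i ≤ 1 := by
      intro h
      exact hi₀ (hyS i₀ h)
    have hi₀ev : 1 < ev i₀ := by
      by_contra h
      exact hi₀S (Finset.mem_filter.mpr ⟨Finset.mem_univ _, le_of_not_gt h⟩)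
    have : ∑ i, (y i)^2 < ∑ i, ev i * (y i)^2 := by
      apply Finset.sum_lt_sum
      · intro i _
        rcases eq_or_ne (y i) 0 with h | h
        · simp [h]
        · have hiS : i ∉ univ.filter fun j : Fin n => ev j ≤ 1 := fun hmem => h (hyS i hmem)
          have : 1 < ev i := by
            by_contra hc
            exact hiS (Finset.mem_filter.mpr ⟨Finset.mem_univ _, le_of_not_gt hc⟩)
          nlinarith [sq_nonneg (y i), sq_pos_of_ne_zero h]
      · exact ⟨i₀, Finset.mem_univ _, by nlinarith [sq_pos_of_ne_zero hi₀]⟩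
    linarith [heq]
  · -- at least p eigenvalues ≥ 1 (and all are ≤ 2Δ)
    have hfe : (univ.filter fun i : Fin n => 1 ≤ ev i ∧ ev i ≤ 2 * (G.maxDegree : ℝ)) =
        (univ.filter fun i : Fin n => 1 ≤ ev i) := by
      apply Finset.filter_congr
      intro i _
      exact ⟨fun h => h.1, fun h => ⟨h, (slq_eval_bounds G hA i).2⟩⟩
    rw [hfe]
    by_contra hlt
    push_neg at hlt
    obtain ⟨x, y, heq, hyS, i₀, hi₀⟩ := main _ hlt
    have hi₀S : i₀ ∉ univ.filter fun i : Fin n => 1 ≤ ev i := by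
      intro h
      exact hi₀ (hyS i₀ h)
    have hi₀ev : ev i₀ < 1 := by
      by_contra h
      exact hi₀S (Finset.mem_filter.mpr ⟨Finset.mem_univ _, le_of_not_gt h⟩)
    have : ∑ i, ev i * (y i)^2 < ∑ i, (y i)^2 := by
      apply Finset.sum_lt_sum
      · intro i _
        rcases eq_or_ne (y i) 0 with h | h
        · simp [h]
        · have hiS : i ∉ univ.filter fun j : Fin n => 1 ≤ ev j := fun hmem => h (hyS i hmem)
          have : ev i < 1 := by
            by_contra hc
            exact hiS (Finset.mem_filter.mpr ⟨Finset.mem_univ _, le_of_not_gt hc⟩)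
          nlinarith [sq_nonneg (y i), sq_pos_of_ne_zero h]
      · exact ⟨i₀, Finset.mem_univ _, by nlinarith [sq_pos_of_ne_zero hi₀]⟩
    linarith [heq]
end

section
/- Let G = (V,E) and H = (V,F) be graphs on the same vertex set with F ⊆ E, let α ∈ [1/2, 1], and let a ∈ ℝ. Then the number of eigenvalues of A_α(H) in [0, a) is at least the number of eigenvalues of A_α(G) in [0, a), and the number of eigenvalues of A_α(G) in [a, ∞) is at least the number of eigenvalues of A_α(H) in [a, ∞) (all counted with multiplicity). -/
open Finset Matrix RealInnerProductSpace

set_option linter.unnecessarySeqFocus false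

lemma Aalpha_dotProduct {n : ℕ} (α : ℝ) (G : SimpleGraph (Fin n)) [DecidableRel G.Adj]
    (x : Fin n → ℝ) :
    x ⬝ᵥ (Aalpha α G *ᵥ x) =
      ∑ i, ∑ j, if G.Adj i j then α * (x i)^2 + (1 - α) * (x i * x j) else 0 := by
  rw [Aalpha, add_mulVec, dotProduct_add, smul_mulVec, smul_mulVec,
    dotProduct_smul, dotProduct_smul]
  simp only [smul_eq_mul, dotProduct, mulVec_diagonal, SimpleGraph.adjMatrix_mulVec_apply,
    mulVec, SimpleGraph.adjMatrix_apply, Matrix.diagonal_apply, ite_mul, zero_mul,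
    Finset.sum_ite_eq, Finset.mem_univ, if_true]
  rw [Finset.mul_sum, Finset.mul_sum, ← Finset.sum_add_distrib]
  refine Finset.sum_congr rfl fun i _ => ?_
  rw [G.degree_eq_sum_if_adj (R := ℝ) i]
  simp only [Finset.sum_mul, Finset.mul_sum, ← Finset.sum_add_distrib]
  refine Finset.sum_congr rfl fun j _ => ?_
  by_cases h : G.Adj i j <;> simp only [h, if_true, if_false, one_mul, add_zero] <;> ring

lemma Aalpha_posSemidef {n : ℕ} {α : ℝ} (hα0 : 1 / 2 ≤ α) (hα1 : α ≤ 1)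
    (G : SimpleGraph (Fin n)) [DecidableRel G.Adj] : (Aalpha α G).PosSemidef := by
  refine Matrix.PosSemidef.of_dotProduct_mulVec_nonneg (Aalpha_isHermitian α G) fun x => ?_
  rw [star_trivial]
  have h1 := Aalpha_dotProduct α G x
  have h2 : x ⬝ᵥ (Aalpha α G *ᵥ x) =
      ∑ i, ∑ j, if G.Adj i j then α * (x j)^2 + (1 - α) * (x i * x j) else 0 := by
    rw [h1, Finset.sum_comm]
    refine Finset.sum_congr rfl fun i _ => Finset.sum_congr rfl fun j _ => ?_
    rw [if_congr (G.adj_comm j i) rfl rfl]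
    by_cases h : G.Adj i j <;> simp only [h, if_true, if_false] <;> ring
  have key : 0 ≤ 2 * (x ⬝ᵥ (Aalpha α G *ᵥ x)) := by
    have e : 2 * (x ⬝ᵥ (Aalpha α G *ᵥ x)) =
        ∑ i, ∑ j, if G.Adj i j then
          (1 - α) * (x i + x j)^2 + (2 * α - 1) * ((x i)^2 + (x j)^2) else 0 := by
      rw [two_mul]; nth_rewrite 1 [h1]; rw [h2, ← Finset.sum_add_distrib]
      refine Finset.sum_congr rfl fun i _ => ?_
      rw [← Finset.sum_add_distrib]
      refine Finset.sum_congr rfl fun j _ => ?_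
      by_cases h : G.Adj i j <;> simp only [h, if_true, if_false, add_zero] <;> ring
    rw [e]
    refine Finset.sum_nonneg fun i _ => Finset.sum_nonneg fun j _ => ?_
    split_ifs
    · have := sq_nonneg (x i + x j); have := sq_nonneg (x i); have := sq_nonneg (x j); nlinarith
    · exact le_rfl
  linarith

lemma inner_eq_dot {n : ℕ} (u v : EuclideanSpace ℝ (Fin n)) : ⟪u, v⟫ = u ⬝ᵥ v := by
  simp [PiLp.inner_apply, dotProduct, RCLike.inner_apply, conj_trivial, mul_comm]

lemma inner_mulVec_eig {n : ℕ} {P : Matrix (Fin n) (Fin n) ℝ} (hP : P.IsHermitian)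
    (x : EuclideanSpace ℝ (Fin n)) (j : Fin n) :
    ⟪hP.eigenvectorBasis j, (WithLp.toLp 2 (P *ᵥ x) : EuclideanSpace ℝ (Fin n))⟫ =
      hP.eigenvalues j * ⟪hP.eigenvectorBasis j, x⟫ := by
  have hsym : Pᵀ = P := by
    rw [← Matrix.conjTranspose_eq_transpose_of_trivial]; exact hP
  rw [inner_eq_dot, inner_eq_dot, WithLp.ofLp_toLp, Matrix.dotProduct_mulVec, ← Matrix.mulVec_transpose, hsym]
  show (P *ᵥ ⇑(hP.eigenvectorBasis j)) ⬝ᵥ x = _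
  rw [hP.mulVec_eigenvectorBasis, smul_dotProduct, smul_eq_mul]

lemma herm_quad {n : ℕ} {P : Matrix (Fin n) (Fin n) ℝ} (hP : P.IsHermitian)
    (x : EuclideanSpace ℝ (Fin n)) :
    ⟪x, (WithLp.toLp 2 (P *ᵥ x) : EuclideanSpace ℝ (Fin n))⟫ =
      ∑ j, hP.eigenvalues j * ⟪hP.eigenvectorBasis j, x⟫ ^ 2 := by
  rw [← hP.eigenvectorBasis.sum_inner_mul_inner x (WithLp.toLp 2 (P *ᵥ x) : EuclideanSpace ℝ (Fin n))]
  refine Finset.sum_congr rfl fun j _ => ?_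
  rw [inner_mulVec_eig hP x j, real_inner_comm x (hP.eigenvectorBasis j)]
  ring

lemma parseval_sq {n : ℕ} (b : OrthonormalBasis (Fin n) ℝ (EuclideanSpace ℝ (Fin n)))
    (x : EuclideanSpace ℝ (Fin n)) :
    ⟪x, x⟫ = ∑ j, ⟪b j, x⟫ ^ 2 := by
  rw [← b.sum_inner_mul_inner x x]
  refine Finset.sum_congr rfl fun j _ => ?_
  rw [real_inner_comm x (b j)]; ring

lemma coord_zero_of_mem_span {n : ℕ} (b : OrthonormalBasis (Fin n) ℝ (EuclideanSpace ℝ (Fin n)))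
    (s : Finset (Fin n)) {x : EuclideanSpace ℝ (Fin n)}
    (hx : x ∈ Submodule.span ℝ (⇑b '' ↑s)) {j : Fin n} (hj : j ∉ s) :
    ⟪b j, x⟫ = 0 := by
  induction hx using Submodule.span_induction with
  | mem y hy =>
    obtain ⟨i, hi, rfl⟩ := hy
    exact b.orthonormal.2 (fun h : j = i => hj (h ▸ hi))
  | zero => exact inner_zero_right _
  | add y z _ _ hy hz => rw [inner_add_right, hy, hz, add_zero]
  | smul c y _ hy => rw [inner_smul_right, hy, mul_zero]

lemma eigcount_mono {n : ℕ} {M N : Matrix (Fin n) (Fin n) ℝ} (hM : M.IsHermitian)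
    (hN : N.IsHermitian) (hMN : (M - N).PosSemidef) (a : ℝ) :
    (univ.filter fun i => a ≤ hN.eigenvalues i).card ≤
      (univ.filter fun i => a ≤ hM.eigenvalues i).card := by
  by_contra hcon
  push_neg at hcon
  set bN := hN.eigenvectorBasis with hbN
  set bM := hM.eigenvectorBasis with hbM
  set sN := univ.filter (fun i => a ≤ hN.eigenvalues i) with hsN
  set sM := univ.filter (fun i => a ≤ hM.eigenvalues i) with hsM
  set tM := univ.filter (fun i => ¬ a ≤ hM.eigenvalues i) with htM
  have hcard : sM.card + tM.card = n := by
    rw [hsM, htM, Finset.card_filter_add_card_filter_not]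
    simp
  set S := Submodule.span ℝ (⇑bN '' ↑sN) with hS
  set T := Submodule.span ℝ (⇑bM '' ↑tM) with hT
  have hdimS : Module.finrank ℝ S = sN.card := by
    rw [hS, show (⇑bN '' ↑sN) = Set.range (⇑bN ∘ (Subtype.val : (↑sN : Set (Fin n)) → Fin n)) from by
        rw [Set.range_comp, Subtype.range_coe],
      finrank_span_eq_card ((bN.orthonormal.linearIndependent).comp _ Subtype.val_injective)]
    simp
  have hdimT : Module.finrank ℝ T = tM.card := by
    rw [hT, show (⇑bM '' ↑tM) = Set.range (⇑bM ∘ (Subtype.val : (↑tM : Set (Fin n)) → Fin n)) from by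
        rw [Set.range_comp, Subtype.range_coe],
      finrank_span_eq_card ((bM.orthonormal.linearIndependent).comp _ Subtype.val_injective)]
    simp
  have hndis : ¬ Disjoint S T := by
    intro hdis
    have hle := Submodule.finrank_add_finrank_le_of_disjoint hdis
    rw [hdimS, hdimT, finrank_euclideanSpace_fin] at hle
    omega
  rw [Submodule.disjoint_def] at hndis
  push_neg at hndis
  obtain ⟨x, hxS, hxT, hx0⟩ := hndis
  have hNge : a * ⟪x, x⟫ ≤ ⟪x, (WithLp.toLp 2 (N *ᵥ x) : EuclideanSpace ℝ (Fin n))⟫ := by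
    rw [herm_quad hN x, parseval_sq bN x, Finset.mul_sum]
    refine Finset.sum_le_sum fun j _ => ?_
    by_cases hj : j ∈ sN
    · have haj : a ≤ hN.eigenvalues j := by
        rw [hsN] at hj; exact (Finset.mem_filter.1 hj).2
      nlinarith [sq_nonneg (⟪bN j, x⟫)]
    · rw [coord_zero_of_mem_span bN sN hxS hj]
      simp
  have hMlt : ⟪x, (WithLp.toLp 2 (M *ᵥ x) : EuclideanSpace ℝ (Fin n))⟫ < a * ⟪x, x⟫ := by
    rw [herm_quad hM x, parseval_sq bM x, Finset.mul_sum]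
    have hpos : 0 < ⟪x, x⟫ := by
      rcases lt_or_eq_of_le (real_inner_self_nonneg (x := x)) with h | h
      · exact h
      · exact absurd (inner_self_eq_zero.1 h.symm) hx0
    have hex : ∃ j0, ⟪bM j0, x⟫ ≠ 0 := by
      by_contra hall
      push_neg at hall
      rw [parseval_sq bM x] at hpos
      simp [hall] at hpos
    obtain ⟨j0, hj0⟩ := hex
    have hj0t : j0 ∈ tM := by
      by_contra h
      exact hj0 (coord_zero_of_mem_span bM tM hxT h)
    refine Finset.sum_lt_sum (fun j _ => ?_) ⟨j0, Finset.mem_univ j0, ?_⟩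
    · by_cases hj : j ∈ tM
      · have hlt : hM.eigenvalues j < a := by
          rw [htM] at hj
          exact lt_of_not_ge (Finset.mem_filter.1 hj).2
        nlinarith [sq_nonneg (⟪bM j, x⟫)]
      · rw [coord_zero_of_mem_span bM tM hxT hj]
        simp
    · have hlt : hM.eigenvalues j0 < a := by
        rw [htM] at hj0t
        exact lt_of_not_ge (Finset.mem_filter.1 hj0t).2
      have hsq : 0 < ⟪bM j0, x⟫ ^ 2 := by positivity
      nlinarith
  have hMN' : ⟪x, (WithLp.toLp 2 (N *ᵥ x) : EuclideanSpace ℝ (Fin n))⟫ ≤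
      ⟪x, (WithLp.toLp 2 (M *ᵥ x) : EuclideanSpace ℝ (Fin n))⟫ := by
    have h0 := hMN.dotProduct_mulVec_nonneg x
    rw [star_trivial, Matrix.sub_mulVec, dotProduct_sub] at h0
    rw [inner_eq_dot, inner_eq_dot, WithLp.ofLp_toLp, WithLp.ofLp_toLp]
    linarith
  linarith

open Finset in
/-- If `H` is a spanning subgraph of `G` (same vertex set, `F ⊆ E`) and `α ∈ [1/2, 1]`,
then for any `a ∈ ℝ`, `m_{A_α(H)}[0, a) ≥ m_{A_α(G)}[0, a)` and
`m_{A_α(G)}[a, ∞) ≥ m_{A_α(H)}[a, ∞)` (with multiplicity). -/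
theorem Aalpha_subgraph_eigenvalue_count (n : ℕ)
    (G : SimpleGraph (Fin n)) [DecidableRel G.Adj]
    (H : SimpleGraph (Fin n)) [DecidableRel H.Adj] (hHG : H ≤ G)
    (α : ℝ) (hα0 : 1 / 2 ≤ α) (hα1 : α ≤ 1) (a : ℝ) :
    (univ.filter fun i : Fin n =>
        0 ≤ (Aalpha_isHermitian α G).eigenvalues i ∧
          (Aalpha_isHermitian α G).eigenvalues i < a).card ≤
      (univ.filter fun i : Fin n =>
        0 ≤ (Aalpha_isHermitian α H).eigenvalues i ∧
          (Aalpha_isHermitian α H).eigenvalues i < a).card ∧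
    (univ.filter fun i : Fin n =>
        a ≤ (Aalpha_isHermitian α H).eigenvalues i).card ≤
      (univ.filter fun i : Fin n =>
        a ≤ (Aalpha_isHermitian α G).eigenvalues i).card := by
  haveI : DecidableRel (G \ H).Adj := fun a b =>
    inferInstanceAs (Decidable (G.Adj a b ∧ ¬ H.Adj a b))
  have hdeg : ∀ v, ((G \ H).degree v : ℝ) = G.degree v - H.degree v := by
    intro v
    rw [(G \ H).degree_eq_sum_if_adj (R := ℝ) v, G.degree_eq_sum_if_adj (R := ℝ) v,
      H.degree_eq_sum_if_adj (R := ℝ) v, ← Finset.sum_sub_distrib]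
    refine Finset.sum_congr rfl fun j _ => ?_
    by_cases hg : G.Adj v j <;> by_cases hh : H.Adj v j <;>
      simp [SimpleGraph.sdiff_adj, hg, hh]
    exact absurd (hHG hh) hg
  have hdiff : Aalpha α G - Aalpha α H = Aalpha α (G \ H) := by
    ext i j
    simp only [Aalpha, Matrix.sub_apply, Matrix.add_apply, Matrix.smul_apply,
      Matrix.diagonal_apply, SimpleGraph.adjMatrix_apply, smul_eq_mul, SimpleGraph.sdiff_adj]
    by_cases hij : i = j
    · subst hij
      simp only [if_true, hdeg i, SimpleGraph.irrefl, if_false, and_false, false_and]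
      ring
    · simp only [hij, if_false]
      by_cases hg : G.Adj i j <;> by_cases hh : H.Adj i j
      · simp [hg, hh]
      · simp [hg, hh]
      · exact absurd (hHG hh) hg
      · simp [hg, hh]
  have hd : (Aalpha α G - Aalpha α H).PosSemidef := by
    rw [hdiff]; exact Aalpha_posSemidef hα0 hα1 (G \ H)
  have second := eigcount_mono (Aalpha_isHermitian α G) (Aalpha_isHermitian α H) hd a
  have hGnn : ∀ i, 0 ≤ (Aalpha_isHermitian α G).eigenvalues i := fun i =>
    (Aalpha_posSemidef hα0 hα1 G).eigenvalues_nonneg i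
  have hHnn : ∀ i, 0 ≤ (Aalpha_isHermitian α H).eigenvalues i := fun i =>
    (Aalpha_posSemidef hα0 hα1 H).eigenvalues_nonneg i
  refine ⟨?_, second⟩
  have e1 : (univ.filter fun i : Fin n =>
      0 ≤ (Aalpha_isHermitian α G).eigenvalues i ∧ (Aalpha_isHermitian α G).eigenvalues i < a) =
      univ.filter (fun i => ¬ a ≤ (Aalpha_isHermitian α G).eigenvalues i) := by
    refine Finset.filter_congr fun i _ => ?_
    exact ⟨fun h => not_le.2 h.2, fun h => ⟨hGnn i, not_le.1 h⟩⟩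
  have e2 : (univ.filter fun i : Fin n =>
      0 ≤ (Aalpha_isHermitian α H).eigenvalues i ∧ (Aalpha_isHermitian α H).eigenvalues i < a) =
      univ.filter (fun i => ¬ a ≤ (Aalpha_isHermitian α H).eigenvalues i) := by
    refine Finset.filter_congr fun i _ => ?_
    exact ⟨fun h => not_le.2 h.2, fun h => ⟨hHnn i, not_le.1 h⟩⟩
  have c1 := Finset.card_filter_add_card_filter_not (s := (univ : Finset (Fin n)))
    (p := fun i => a ≤ (Aalpha_isHermitian α G).eigenvalues i)
  have c2 := Finset.card_filter_add_card_filter_not (s := (univ : Finset (Fin n)))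
    (p := fun i => a ≤ (Aalpha_isHermitian α H).eigenvalues i)
  rw [e1, e2]
  omega
end

section
/- If G is a graph and α ∈ [1/2, 1], then the number of eigenvalues of A_α(G) in the interval [0, α), counted with multiplicity, is at most the domination number γ(G). -/
/-- `D` is a dominating set of `G`. -/
def IsDomSet {n : ℕ} (G : SimpleGraph (Fin n)) (D : Finset (Fin n)) : Prop :=
  ∀ v : Fin n, v ∈ D ∨ ∃ u ∈ D, G.Adj u v

open Finset Matrix in
lemma quadform_eq {n : ℕ} (α : ℝ) (G : SimpleGraph (Fin n)) [DecidableRel G.Adj]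
    (x : Fin n → ℝ) :
    x ⬝ᵥ ((Aalpha α G) *ᵥ x) =
      ∑ v, ∑ u, (if G.Adj v u then α*((x v)^2 + (x u)^2)/2 + (1-α)*(x v * x u) else 0) := by
  have hdeg : ∀ v, (G.degree v : ℝ) = ∑ u, (if G.Adj v u then (1:ℝ) else 0) := by
    intro v
    rw [← SimpleGraph.card_neighborFinset_eq_degree, SimpleGraph.neighborFinset_eq_filter]
    simp [Finset.sum_boole]
  have hSa : ∑ v, (G.degree v:ℝ) * (x v)^2 = ∑ v, ∑ u, (if G.Adj v u then (x v)^2 else 0) := by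
    refine Finset.sum_congr rfl fun v _ => ?_
    rw [hdeg, Finset.sum_mul]
    exact Finset.sum_congr rfl fun u _ => by split <;> simp
  have hSb : ∑ v, ∑ u, (if G.Adj v u then (x u)^2 else 0)
      = ∑ v, (G.degree v:ℝ) * (x v)^2 := by
    rw [Finset.sum_comm]
    refine Finset.sum_congr rfl fun u _ => ?_
    rw [hdeg, Finset.sum_mul]
    refine Finset.sum_congr rfl fun v _ => ?_
    rw [if_congr (G.adj_comm v u) rfl rfl]
    split <;> simp
  have hSc : ∑ v, x v * ∑ u ∈ G.neighborFinset v, x u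
      = ∑ v, ∑ u, (if G.Adj v u then x v * x u else 0) := by
    refine Finset.sum_congr rfl fun v _ => ?_
    rw [SimpleGraph.neighborFinset_eq_filter, Finset.sum_filter, Finset.mul_sum]
    exact Finset.sum_congr rfl fun u _ => by split <;> simp
  have lhs_eq : x ⬝ᵥ ((Aalpha α G) *ᵥ x)
      = α * ∑ v, (G.degree v:ℝ) * (x v)^2
        + (1-α) * ∑ v, x v * ∑ u ∈ G.neighborFinset v, x u := by
    rw [Aalpha, Matrix.add_mulVec, dotProduct_add, Matrix.smul_mulVec,
      dotProduct_smul, Matrix.smul_mulVec, dotProduct_smul]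
    congr 1
    · rw [smul_eq_mul]
      congr 1
      simp only [dotProduct, Matrix.mulVec_diagonal]
      exact Finset.sum_congr rfl fun v _ => by ring
    · rw [smul_eq_mul]
      congr 1
      simp only [dotProduct, SimpleGraph.adjMatrix_mulVec_apply]
  have rhs_eq : ∑ v, ∑ u, (if G.Adj v u then α*((x v)^2 + (x u)^2)/2 + (1-α)*(x v * x u) else 0)
      = (α/2) * (∑ v, ∑ u, (if G.Adj v u then (x v)^2 else 0))
        + (α/2) * (∑ v, ∑ u, (if G.Adj v u then (x u)^2 else 0))
        + (1-α) * (∑ v, ∑ u, (if G.Adj v u then x v * x u else 0)) := by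
    simp only [Finset.mul_sum, ← Finset.sum_add_distrib]
    refine Finset.sum_congr rfl fun v _ => Finset.sum_congr rfl fun u _ => ?_
    split <;> ring
  rw [lhs_eq, rhs_eq, hSb, ← hSa, ← hSc]
  ring

open Finset Matrix in
lemma quadform_ge {n : ℕ} (α : ℝ) (G : SimpleGraph (Fin n)) [DecidableRel G.Adj]
    (hα0 : 1 / 2 ≤ α) (hα1 : α ≤ 1) (D : Finset (Fin n)) (hD : IsDomSet G D)
    (x : Fin n → ℝ) (hx : ∀ v ∈ D, x v = 0) :
    α * (x ⬝ᵥ x) ≤ x ⬝ᵥ ((Aalpha α G) *ᵥ x) := by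
  classical
  rw [quadform_eq]
  have hdom : ∀ v : Fin n, v ∉ D → ∃ u, u ∈ D ∧ G.Adj u v := by
    intro v hv
    rcases hD v with h | ⟨u, hu, ha⟩
    · exact absurd h hv
    · exact ⟨u, hu, ha⟩
  let d : Fin n → Fin n := fun v => if h : v ∉ D then (hdom v h).choose else v
  have hdD : ∀ v ∉ D, d v ∈ D := by
    intro v hv; simp only [d, dif_pos hv]; exact (hdom v hv).choose_spec.1
  have hdAdj : ∀ v ∉ D, G.Adj (d v) v := by
    intro v hv; simp only [d, dif_pos hv]; exact (hdom v hv).choose_spec.2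
  set h : Fin n × Fin n → ℝ := fun p =>
    if G.Adj p.1 p.2 then α*((x p.1)^2 + (x p.2)^2)/2 + (1-α)*(x p.1 * x p.2) else 0 with hh
  have hnonneg : ∀ p : Fin n × Fin n, 0 ≤ h p := by
    intro p
    simp only [hh]
    split
    · nlinarith [mul_nonneg (by linarith : (0:ℝ) ≤ 1-α) (sq_nonneg (x p.1 + x p.2)),
        mul_nonneg (by linarith : (0:ℝ) ≤ 2*α-1)
          (add_nonneg (sq_nonneg (x p.1)) (sq_nonneg (x p.2)))]
    · exact le_refl 0
  have hrw : ∑ v, ∑ u, (if G.Adj v u then α*((x v)^2 + (x u)^2)/2 + (1-α)*(x v * x u) else 0)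
      = ∑ p ∈ univ ×ˢ univ, h p := by
    rw [Finset.sum_product]
  rw [hrw]
  set T : Finset (Fin n × Fin n) :=
    ((univ \ D).image fun v => (v, d v)) ∪ ((univ \ D).image fun v => (d v, v)) with hT
  have hdisj : Disjoint ((univ \ D).image fun v => (v, d v))
      ((univ \ D).image fun v => (d v, v)) := by
    rw [Finset.disjoint_left]
    rintro p hp1 hp2
    simp only [Finset.mem_image, Finset.mem_sdiff, Finset.mem_univ, true_and] at hp1 hp2
    obtain ⟨v, hv, rfl⟩ := hp1
    obtain ⟨w, hw, hEq⟩ := hp2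
    have : v = d w := (Prod.mk.injEq _ _ _ _).mp hEq.symm |>.1
    exact hv (this ▸ hdD w hw)
  have hval1 : ∀ v ∈ univ \ D, h (v, d v) = α * (x v)^2 / 2 := by
    intro v hv
    have hv' : v ∉ D := by simpa using hv
    have : G.Adj v (d v) := (G.adj_comm _ _).mp (hdAdj v hv')
    simp only [hh, this, if_pos, hx (d v) (hdD v hv')]
    ring
  have hval2 : ∀ v ∈ univ \ D, h (d v, v) = α * (x v)^2 / 2 := by
    intro v hv
    have hv' : v ∉ D := by simpa using hv
    have : G.Adj (d v) v := hdAdj v hv'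
    simp only [hh, this, if_pos, hx (d v) (hdD v hv')]
    ring
  have hsumT : ∑ p ∈ T, h p = α * ∑ v ∈ univ \ D, (x v)^2 := by
    rw [hT, Finset.sum_union hdisj]
    rw [Finset.sum_image (fun a _ b _ hab => ((Prod.mk.injEq _ _ _ _).mp hab).1),
      Finset.sum_image (fun a _ b _ hab => ((Prod.mk.injEq _ _ _ _).mp hab).2)]
    rw [Finset.sum_congr rfl hval1, Finset.sum_congr rfl hval2, Finset.mul_sum,
      ← Finset.sum_add_distrib]
    exact Finset.sum_congr rfl fun v _ => by ring
  have hdot : α * (x ⬝ᵥ x) = α * ∑ v ∈ univ \ D, (x v)^2 := by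
    have : x ⬝ᵥ x = ∑ v ∈ univ \ D, (x v)^2 := by
      rw [dotProduct]
      rw [← Finset.sum_subset (Finset.sdiff_subset) (fun v _ hv => by
        have hvD : v ∈ D := by simpa using hv
        simp [hx v hvD])]
      exact Finset.sum_congr rfl fun v _ => (sq (x v)).symm
    rw [this]
  rw [hdot, ← hsumT]
  exact Finset.sum_le_sum_of_subset_of_nonneg
    (by intro p _; simp [Finset.mem_product]) (fun p _ _ => hnonneg p)


set_option maxHeartbeats 1000000 in
open Finset in
/-- For `α ∈ [1/2, 1]`, the number of eigenvalues of `A_α(G)` in `[0, α)`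
(with multiplicity) is at most the domination number `γ(G)`. -/
theorem Aalpha_count_le_domination (n : ℕ) (G : SimpleGraph (Fin n)) [DecidableRel G.Adj]
    (α : ℝ) (hα0 : 1 / 2 ≤ α) (hα1 : α ≤ 1)
    (γ : ℕ) (hγ : IsLeast {k | ∃ D : Finset (Fin n), IsDomSet G D ∧ D.card = k} γ) :
    (univ.filter fun i : Fin n =>
        0 ≤ (Aalpha_isHermitian α G).eigenvalues i ∧
          (Aalpha_isHermitian α G).eigenvalues i < α).card ≤ γ := by
  classical
  obtain ⟨D, hDdom, hDcard⟩ := hγ.1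
  set hM := Aalpha_isHermitian α G with hMdef
  set S : Finset (Fin n) :=
    univ.filter (fun i => 0 ≤ hM.eigenvalues i ∧ hM.eigenvalues i < α) with hS
  set B := hM.eigenvectorBasis with hB
  have hBinj : Function.Injective B := by
    intro i j hij
    exact B.toBasis.injective (by simpa using hij)
  -- dot products of eigenvectors
  -- subspace W
  set W : Submodule ℝ (EuclideanSpace ℝ (Fin n)) :=
    Submodule.span ℝ (↑(S.image B) : Set (EuclideanSpace ℝ (Fin n))) with hW
  have hWrank : Module.finrank ℝ W = S.card := by
    have hli : LinearIndependent ℝ (fun i : {i // i ∈ S} => B i) :=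
      (B.orthonormal.comp Subtype.val Subtype.val_injective).linearIndependent
    have hrange : Set.range (fun i : {i // i ∈ S} => B i)
        = (↑(S.image B) : Set (EuclideanSpace ℝ (Fin n))) := by
      ext y
      simp [Set.range, eq_comm]
    rw [hW, ← hrange, finrank_span_eq_card hli]
    simp
  -- subspace U
  set φ : EuclideanSpace ℝ (Fin n) →ₗ[ℝ] ({v // v ∈ D} → ℝ) :=
    { toFun := fun x v => x v.1
      map_add' := fun a b => rfl
      map_smul' := fun c a => rfl } with hφ
  set U := LinearMap.ker φ with hU
  -- intersection is trivial
  have hinter : W ⊓ U = ⊥ := by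
    rw [eq_bot_iff]
    intro x hxmem
    obtain ⟨hxW, hxU⟩ := Submodule.mem_inf.mp hxmem
    simp only [Submodule.mem_bot]
    by_contra hx0
    obtain ⟨f, -, hf⟩ := Submodule.mem_span_finset.mp hxW
    have hxsum : x = ∑ i ∈ S, f (B i) • B i := by
      rw [← hf, Finset.sum_image (fun a _ b _ hab => hBinj hab)]
    set c : Fin n → ℝ := fun i => f (B i) with hc
    have hxD : ∀ v ∈ D, x v = 0 := by
      intro v hv
      have := LinearMap.mem_ker.mp hxU
      exact congrFun this ⟨v, hv⟩
    set T : EuclideanSpace ℝ (Fin n) →ₗ[ℝ] EuclideanSpace ℝ (Fin n) :=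
      Matrix.toEuclideanLin (Aalpha α G) with hTdef
    have hTB : ∀ i, T (B i) = hM.eigenvalues i • B i := fun i => by
      rw [hTdef, Matrix.toEuclideanLin_apply, hM.mulVec_eigenvectorBasis i]; rfl
    have hinner : ∀ i j, (inner ℝ (B i) (B j) : ℝ) = if i = j then 1 else 0 :=
      orthonormal_iff_ite.mp B.orthonormal
    have hxB : ∀ j, (inner ℝ x (B j) : ℝ) = if j ∈ S then c j else 0 := by
      intro j
      rw [hxsum, sum_inner]
      simp only [real_inner_smul_left, hinner, mul_ite, mul_one, mul_zero]
      rw [Finset.sum_ite_eq' S j c]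
    have hxx : (inner ℝ x x : ℝ) = ∑ i ∈ S, (c i)^2 := by
      nth_rewrite 1 [hxsum]
      rw [sum_inner]
      simp only [real_inner_smul_left]
      refine Finset.sum_congr rfl fun i hi => ?_
      have h := hxB i
      rw [real_inner_comm] at h
      rw [h, if_pos hi, sq]
    have hTx : T x = ∑ i ∈ S, (c i * hM.eigenvalues i) • B i := by
      conv_lhs => rw [hxsum, map_sum]
      refine Finset.sum_congr rfl fun i _ => ?_
      rw [map_smul, hTB i, smul_smul]
    have hQ : (inner ℝ x (T x) : ℝ) = ∑ i ∈ S, hM.eigenvalues i * (c i)^2 := by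
      rw [hTx, inner_sum]
      simp only [real_inner_smul_right]
      refine Finset.sum_congr rfl fun i hi => ?_
      rw [hxB i, if_pos hi]
      ring
    -- boundary: dot products
    have hbdd1 : dotProduct (x : Fin n → ℝ) x = (inner ℝ x x : ℝ) := by
      simp only [PiLp.inner_apply, RCLike.inner_apply, conj_trivial, dotProduct]
    have hbdd2 : dotProduct (x : Fin n → ℝ) ((Aalpha α G).mulVec x)
        = (inner ℝ x (T x) : ℝ) := by
      simp only [hTdef, PiLp.inner_apply, RCLike.inner_apply, conj_trivial,
        Matrix.toEuclideanLin_apply, dotProduct]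
      exact Finset.sum_congr rfl fun i _ => mul_comm _ _
    have hex : ∃ i ∈ S, c i ≠ 0 := by
      by_contra hall
      push_neg at hall
      apply hx0
      rw [hxsum]
      refine Finset.sum_eq_zero fun i hi => ?_
      have h0 : f (B i) = 0 := hall i hi
      rw [h0, zero_smul]
    have hlt : dotProduct (x : Fin n → ℝ) ((Aalpha α G).mulVec x)
        < α * dotProduct (x : Fin n → ℝ) x := by
      rw [hbdd1, hbdd2, hQ, hxx, Finset.mul_sum]
      obtain ⟨i0, hi0, hci0⟩ := hex
      refine Finset.sum_lt_sum (fun i hi => ?_) ⟨i0, hi0, ?_⟩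
      · have hiα : hM.eigenvalues i < α := (Finset.mem_filter.mp hi).2.2
        nlinarith [sq_nonneg (c i)]
      · have hiα : hM.eigenvalues i0 < α := (Finset.mem_filter.mp hi0).2.2
        have : 0 < (c i0)^2 := by positivity
        nlinarith
    have hge := quadform_ge α G hα0 hα1 D hDdom x hxD
    linarith
  -- rank counting
  have hrank_sum : Module.finrank ℝ (W ⊔ U : Submodule ℝ (EuclideanSpace ℝ (Fin n)))
      + Module.finrank ℝ (W ⊓ U : Submodule ℝ (EuclideanSpace ℝ (Fin n)))
      = Module.finrank ℝ W + Module.finrank ℝ U :=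
    Submodule.finrank_sup_add_finrank_inf_eq W U
  have hbot : Module.finrank ℝ (W ⊓ U : Submodule ℝ (EuclideanSpace ℝ (Fin n))) = 0 := by
    rw [hinter]; exact finrank_bot ℝ _
  have hsup_le : Module.finrank ℝ (W ⊔ U : Submodule ℝ (EuclideanSpace ℝ (Fin n))) ≤ n := by
    refine le_trans (Submodule.finrank_le _) ?_
    simp [finrank_euclideanSpace]
  have hrn : Module.finrank ℝ (LinearMap.range φ) + Module.finrank ℝ U = n := by
    rw [hU]
    rw [LinearMap.finrank_range_add_finrank_ker φ]
    simp [finrank_euclideanSpace]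
  have hrange_le : Module.finrank ℝ (LinearMap.range φ) ≤ γ := by
    refine le_trans (Submodule.finrank_le _) ?_
    rw [Module.finrank_fintype_fun_eq_card]
    simp [Fintype.card_coe, hDcard]
  omega
end

section
/- If G is a graph of order n and α ∈ [1/2, 1], then A_α(G) has at least n − γ(G) eigenvalues in the interval [α, Δ(G)] (with multiplicity), where γ(G) is the domination number and Δ(G) the maximum degree. -/
open Finset Matrix in
lemma quad_expand {n : ℕ} (G : SimpleGraph (Fin n)) [DecidableRel G.Adj] (α : ℝ)
    (x : Fin n → ℝ) :
    x ⬝ᵥ (Aalpha α G *ᵥ x) =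
      ∑ p ∈ univ.filter (fun p : Fin n × Fin n => G.Adj p.1 p.2),
        (α/2 * (x p.1 ^ 2 + x p.2 ^ 2) + (1 - α) * (x p.1 * x p.2)) := by
  have sym : ∀ g : Fin n → ℝ,
      (∑ i, ∑ j, if G.Adj i j then g j else 0) = ∑ i, ∑ j, if G.Adj i j then g i else 0 := by
    intro g
    rw [Finset.sum_comm]
    simp_rw [SimpleGraph.adj_comm]
  have hdeg : ∀ i, (G.degree i : ℝ) = ∑ j, if G.Adj i j then (1:ℝ) else 0 := by
    intro i
    rw [SimpleGraph.degree, SimpleGraph.neighborFinset_eq_filter, Finset.card_filter]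
    push_cast
    rfl
  rw [Finset.sum_filter, Fintype.sum_prod_type]
  simp only [dotProduct, Aalpha, Matrix.add_mulVec, Matrix.smul_mulVec,
    Matrix.mulVec_diagonal, SimpleGraph.adjMatrix_mulVec_apply, Pi.add_apply, Pi.smul_apply,
    smul_eq_mul]
  have lhs_eq : ∀ i, x i * (α * ((G.degree i : ℝ) * x i) + (1-α) * ∑ u ∈ G.neighborFinset i, x u)
      = ∑ j, if G.Adj i j then (α * x i ^ 2 + (1-α) * (x i * x j)) else 0 := by
    intro i
    have hN : ∑ u ∈ G.neighborFinset i, x u = ∑ j, if G.Adj i j then x j else 0 := by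
      rw [SimpleGraph.neighborFinset_eq_filter, Finset.sum_filter]
    have key : x i * (α * ((G.degree i : ℝ) * x i) + (1-α) * ∑ u ∈ G.neighborFinset i, x u)
        = α * x i ^ 2 * (∑ j, if G.Adj i j then (1:ℝ) else 0)
          + (1-α) * x i * (∑ j, if G.Adj i j then x j else 0) := by
      rw [hdeg i] at *
      rw [hN]; ring
    rw [key, Finset.mul_sum, Finset.mul_sum, ← Finset.sum_add_distrib]
    refine Finset.sum_congr rfl fun j _ => ?_
    by_cases h : G.Adj i j <;> simp [h] <;> ring
  simp_rw [lhs_eq]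
  have h1 : ∀ i j : Fin n, (if G.Adj i j then (α/2 * (x i ^2 + x j ^2) + (1-α)*(x i * x j)) else 0)
      = ((if G.Adj i j then (α/2 * x i ^2 + (1-α)*(x i * x j)) else 0)
          + (if G.Adj i j then ((fun v => α/2 * x v ^2) j) else 0)) := by
    intro i j; by_cases h : G.Adj i j <;> simp [h]; ring
  have h2 : ∀ i j : Fin n, (if G.Adj i j then (α * x i ^2 + (1-α)*(x i * x j)) else 0)
      = ((if G.Adj i j then (α/2 * x i ^2 + (1-α)*(x i * x j)) else 0)
          + (if G.Adj i j then ((fun v => α/2 * x v ^2) i) else 0)) := by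
    intro i j; by_cases h : G.Adj i j <;> simp [h]; ring
  simp_rw [h2, h1, Finset.sum_add_distrib]
  rw [sym (fun v => α/2 * x v ^2)]

open Finset Matrix in
lemma quadForm_ge {n : ℕ} (G : SimpleGraph (Fin n)) [DecidableRel G.Adj] (α : ℝ)
    (hα0 : 1 / 2 ≤ α) (hα1 : α ≤ 1) (D : Finset (Fin n)) (hD : IsDomSet G D)
    (x : Fin n → ℝ) (hx : ∀ u ∈ D, x u = 0) :
    α * (∑ v, x v ^ 2) ≤ x ⬝ᵥ (Aalpha α G *ᵥ x) := by
  classical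
  set t : Fin n × Fin n → ℝ :=
    fun p => α/2 * (x p.1 ^ 2 + x p.2 ^ 2) + (1 - α) * (x p.1 * x p.2) with ht
  have htnn : ∀ p : Fin n × Fin n, 0 ≤ t p := by
    intro p
    have h1 := sq_nonneg (x p.1 + x p.2)
    have h2 := sq_nonneg (x p.1 - x p.2)
    simp only [ht]
    nlinarith
  rw [quad_expand]
  -- choose a dominator for each vertex outside D
  have hdom : ∀ v : Fin n, v ∉ D → ∃ u, u ∈ D ∧ G.Adj u v := by
    intro v hv
    rcases hD v with h | ⟨u, hu, hadj⟩
    · exact absurd h hv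
    · exact ⟨u, hu, hadj⟩
  set f : Fin n → Fin n := fun v => if h : v ∈ D then v else (hdom v h).choose with hf
  have hfD : ∀ v, v ∉ D → f v ∈ D := by
    intro v hv; simp only [hf, dif_neg hv]; exact (hdom v hv).choose_spec.1
  have hfadj : ∀ v, v ∉ D → G.Adj (f v) v := by
    intro v hv; simp only [hf, dif_neg hv]; exact (hdom v hv).choose_spec.2
  set T : Finset (Fin n × Fin n) :=
    (univ \ D).biUnion (fun v => ({(f v, v), (v, f v)} : Finset (Fin n × Fin n))) with hT
  have hTS : T ⊆ univ.filter (fun p : Fin n × Fin n => G.Adj p.1 p.2) := by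
    intro p hp
    simp only [hT, Finset.mem_biUnion, Finset.mem_sdiff, Finset.mem_univ, true_and,
      Finset.mem_insert, Finset.mem_singleton] at hp
    obtain ⟨v, hv, hpv⟩ := hp
    rcases hpv with h | h <;> subst h <;>
      simp [Finset.mem_filter, hfadj v hv, (hfadj v hv).symm]
  have hdisj : ∀ v ∈ univ \ D, ∀ w ∈ univ \ D, v ≠ w →
      Disjoint ({(f v, v), (v, f v)} : Finset (Fin n × Fin n)) {(f w, w), (w, f w)} := by
    intro v hv w hw hvw
    simp only [Finset.mem_sdiff, Finset.mem_univ, true_and] at hv hw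
    rw [Finset.disjoint_left]
    intro p hp hp'
    simp only [Finset.mem_insert, Finset.mem_singleton] at hp hp'
    rcases hp with h | h <;> rcases hp' with h' | h' <;> rw [h] at h' <;>
      simp only [Prod.mk.injEq] at h'
    · exact hvw h'.2
    · exact hv (h'.2 ▸ hfD w hw)
    · exact hv (h'.1 ▸ hfD w hw)
    · exact hvw h'.1
  have hsumT : ∑ p ∈ T, t p = ∑ v ∈ univ \ D, α * x v ^ 2 := by
    rw [hT, Finset.sum_biUnion hdisj]
    refine Finset.sum_congr rfl fun v hv => ?_
    simp only [Finset.mem_sdiff, Finset.mem_univ, true_and] at hv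
    have hne : (f v, v) ≠ (v, f v) := by
      intro h
      simp only [Prod.mk.injEq] at h
      exact (hfadj v hv).ne (h.1)
    rw [Finset.sum_insert (by simpa using hne), Finset.sum_singleton]
    have hxf : x (f v) = 0 := hx _ (hfD v hv)
    simp only [ht, hxf]
    ring
  have hsub : ∑ v ∈ univ \ D, α * x v ^ 2 = α * ∑ v, x v ^ 2 := by
    rw [← Finset.mul_sum]
    congr 1
    refine Finset.sum_subset (Finset.sdiff_subset) fun v _ hv => ?_
    have : v ∈ D := by
      by_contra h
      exact hv (by simp [Finset.mem_sdiff, h])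
    rw [hx v this]; ring
  calc α * ∑ v, x v ^ 2 = ∑ p ∈ T, t p := by rw [hsumT, hsub]
    _ ≤ ∑ p ∈ univ.filter (fun p : Fin n × Fin n => G.Adj p.1 p.2), t p :=
        Finset.sum_le_sum_of_subset_of_nonneg hTS fun p _ _ => htnn p

open Finset Matrix in
lemma quadForm_le {n : ℕ} (G : SimpleGraph (Fin n)) [DecidableRel G.Adj] (α : ℝ)
    (hα1 : α ≤ 1) (x : Fin n → ℝ) :
    x ⬝ᵥ (Aalpha α G *ᵥ x) ≤ (G.maxDegree : ℝ) * (x ⬝ᵥ x) := by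
  have hmat : (G.maxDegree : ℝ) • (1 : Matrix (Fin n) (Fin n) ℝ) - Aalpha α G
      = Matrix.diagonal (fun v => (G.maxDegree : ℝ) - (G.degree v : ℝ))
        + (1 - α) • G.lapMatrix ℝ := by
    ext i j
    by_cases h : i = j
    · subst h
      simp [Aalpha, SimpleGraph.lapMatrix, SimpleGraph.degMatrix, Matrix.one_apply,
        Matrix.diagonal_apply]
      ring
    · simp [Aalpha, SimpleGraph.lapMatrix, SimpleGraph.degMatrix, Matrix.one_apply_ne h,
        Matrix.diagonal_apply_ne _ h, h]
  have h1 : 0 ≤ x ⬝ᵥ ((Matrix.diagonal (fun v => (G.maxDegree : ℝ) - (G.degree v : ℝ))) *ᵥ x) := by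
    simp only [dotProduct, Matrix.mulVec_diagonal]
    apply Finset.sum_nonneg
    intro i _
    have hd := G.degree_le_maxDegree i
    have : (G.degree i : ℝ) ≤ (G.maxDegree : ℝ) := by exact_mod_cast hd
    nlinarith [sq_nonneg (x i)]
  have h2 : 0 ≤ x ⬝ᵥ (G.lapMatrix ℝ *ᵥ x) := by
    have := (G.posSemidef_lapMatrix ℝ).dotProduct_mulVec_nonneg x
    simpa using this
  have h3 := congrArg (fun M : Matrix (Fin n) (Fin n) ℝ => x ⬝ᵥ (M *ᵥ x)) hmat
  simp only [Matrix.sub_mulVec, Matrix.add_mulVec, Matrix.smul_mulVec,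
    dotProduct_sub, dotProduct_add, dotProduct_smul, Matrix.one_mulVec,
    smul_eq_mul] at h3
  nlinarith

open Finset Matrix in
lemma eigenvectorBasis_dotProduct {n : ℕ} {A : Matrix (Fin n) (Fin n) ℝ} (hA : A.IsHermitian)
    (i j : Fin n) :
    (⇑(hA.eigenvectorBasis i) : Fin n → ℝ) ⬝ᵥ ⇑(hA.eigenvectorBasis j)
      = if i = j then 1 else 0 := by
  have h := hA.eigenvectorBasis.orthonormal
  rw [orthonormal_iff_ite] at h
  rw [← h i j]
  simp [PiLp.inner_apply, dotProduct, RCLike.inner_apply, mul_comm]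

open Finset Matrix in
lemma eig_le_maxDegree {n : ℕ} (G : SimpleGraph (Fin n)) [DecidableRel G.Adj] (α : ℝ)
    (hα1 : α ≤ 1) (i : Fin n) :
    (Aalpha_isHermitian α G).eigenvalues i ≤ (G.maxDegree : ℝ) := by
  set hA := Aalpha_isHermitian α G
  set v : Fin n → ℝ := ⇑(hA.eigenvectorBasis i) with hv
  have hev : Aalpha α G *ᵥ v = hA.eigenvalues i • v := hA.mulVec_eigenvectorBasis i
  have hvv : v ⬝ᵥ v = 1 := by
    have := eigenvectorBasis_dotProduct hA i i
    simpa using this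
  have hq : v ⬝ᵥ (Aalpha α G *ᵥ v) = hA.eigenvalues i := by
    rw [hev, dotProduct_smul, smul_eq_mul, hvv, mul_one]
  have := quadForm_le G α hα1 v
  rw [hq, hvv, mul_one] at this
  exact this

open Finset Matrix in
lemma count_lt_le_domset {n : ℕ} (G : SimpleGraph (Fin n)) [DecidableRel G.Adj] (α : ℝ)
    (hα0 : 1 / 2 ≤ α) (hα1 : α ≤ 1) (D : Finset (Fin n)) (hD : IsDomSet G D) :
    (univ.filter fun i : Fin n => (Aalpha_isHermitian α G).eigenvalues i < α).card ≤ D.card := by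
  classical
  set hA := Aalpha_isHermitian α G with hhA
  set b := hA.eigenvectorBasis with hb
  set lam := hA.eigenvalues with hlam
  set S := univ.filter fun i : Fin n => lam i < α with hS
  by_contra hcon
  push_neg at hcon
  -- the span of the eigenvectors with small eigenvalues
  set e : ↥S → EuclideanSpace ℝ (Fin n) := fun i => b i.1 with he
  have hli : LinearIndependent ℝ e :=
    (b.orthonormal.linearIndependent).comp _ Subtype.val_injective
  set W : Submodule ℝ (EuclideanSpace ℝ (Fin n)) := Submodule.span ℝ (Set.range e) with hW
  have hrank : Module.finrank ℝ W = S.card := by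
    rw [hW, finrank_span_eq_card hli, Fintype.card_coe]
  -- restriction to coordinates in D
  set L : EuclideanSpace ℝ (Fin n) →ₗ[ℝ] (↥D → ℝ) :=
    { toFun := fun x u => x u.1
      map_add' := fun x y => rfl
      map_smul' := fun c x => rfl } with hL
  have hni : ¬ Function.Injective (L.comp W.subtype) := by
    intro hinj
    have h1 := LinearMap.finrank_le_finrank_of_injective hinj
    have h2 : Module.finrank ℝ (↥D → ℝ) = D.card := by simp [Module.finrank_pi]
    rw [hrank, h2] at h1
    omega
  rw [Function.not_injective_iff] at hni
  obtain ⟨p, q, hpq, hpqne⟩ := hni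
  set z : EuclideanSpace ℝ (Fin n) := (p : EuclideanSpace ℝ (Fin n)) - q with hz
  have hzW : z ∈ W := sub_mem p.2 q.2
  have hzne : z ≠ 0 := by
    intro h
    exact hpqne (Subtype.ext (sub_eq_zero.mp h))
  have hzD : ∀ u ∈ D, z u = 0 := by
    intro u hu
    have hLz : L z = 0 := by
      rw [hz, map_sub]
      have : L (p : EuclideanSpace ℝ (Fin n)) = L (q : EuclideanSpace ℝ (Fin n)) := hpq
      rw [this, sub_self]
    exact congrFun hLz ⟨u, hu⟩
  -- expand z in the eigenvector basis
  obtain ⟨c, hc⟩ := (Submodule.mem_span_range_iff_exists_fun ℝ).mp hzW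
  set zf : Fin n → ℝ := fun j => z j with hzf0
  have hzfun : ∀ j : Fin n, zf j = ∑ i : ↥S, c i * (b i.1) j := by
    intro j
    show z j = _
    rw [← hc, WithLp.ofLp_sum, Finset.sum_apply]
    rfl
  -- dot products with basis vectors pick out coefficients
  have hdotb : ∀ i : ↥S, ∑ j, zf j * (b i.1) j = c i := by
    intro i
    have step1 : ∑ j, zf j * (b i.1) j = ∑ k : ↥S, c k * ∑ j, (b k.1) j * (b i.1) j := by
      calc ∑ j, zf j * (b i.1) j
          = ∑ j, ∑ k : ↥S, c k * ((b k.1) j * (b i.1) j) := by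
            refine Finset.sum_congr rfl fun j _ => ?_
            rw [hzfun j, Finset.sum_mul]
            exact Finset.sum_congr rfl fun k _ => by ring
        _ = ∑ k : ↥S, ∑ j, c k * ((b k.1) j * (b i.1) j) := Finset.sum_comm
        _ = ∑ k : ↥S, c k * ∑ j, (b k.1) j * (b i.1) j := by
            refine Finset.sum_congr rfl fun k _ => ?_
            rw [Finset.mul_sum]
    rw [step1]
    have hkron : ∀ k : ↥S, c k * ∑ j, (b k.1) j * (b i.1) j = if k = i then c k else 0 := by
      intro k
      have h2 : ∑ j, (b k.1) j * (b i.1) j = if (k.1 : Fin n) = i.1 then 1 else 0 :=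
        eigenvectorBasis_dotProduct hA k.1 i.1
      rw [h2]
      by_cases h : k = i
      · simp [h]
      · have : (k.1 : Fin n) ≠ i.1 := fun hh => h (Subtype.ext hh)
        simp [this, h]
    simp_rw [hkron]
    simp
  -- a helper for computing dot products against z
  have helper : ∀ (d : ↥S → ℝ) (w : Fin n → ℝ),
      (∀ j, w j = ∑ i : ↥S, d i * (b i.1) j) → zf ⬝ᵥ w = ∑ i : ↥S, d i * c i := by
    intro d w hw
    rw [show zf ⬝ᵥ w = ∑ j, zf j * w j from rfl]
    calc ∑ j, zf j * w j
        = ∑ j, ∑ i : ↥S, d i * (zf j * (b i.1) j) := by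
          refine Finset.sum_congr rfl fun j _ => ?_
          rw [hw j, Finset.mul_sum]
          exact Finset.sum_congr rfl fun i _ => by ring
      _ = ∑ i : ↥S, ∑ j, d i * (zf j * (b i.1) j) := Finset.sum_comm
      _ = ∑ i : ↥S, d i * c i := by
          refine Finset.sum_congr rfl fun i _ => ?_
          rw [← Finset.mul_sum, hdotb i]
  -- coordinates of A·z
  have hmul : ∀ j : Fin n, (Aalpha α G *ᵥ zf) j = ∑ i : ↥S, (lam i.1 * c i) * (b i.1) j := by
    intro j
    have hAb : ∀ i : ↥S, ∑ l, Aalpha α G j l * (b i.1) l = lam i.1 * (b i.1) j := by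
      intro i
      have h := congrFun (hA.mulVec_eigenvectorBasis i.1) j
      exact h
    calc (Aalpha α G *ᵥ zf) j = ∑ l, Aalpha α G j l * zf l := rfl
      _ = ∑ l, ∑ i : ↥S, c i * (Aalpha α G j l * (b i.1) l) := by
          refine Finset.sum_congr rfl fun l _ => ?_
          rw [hzfun l, Finset.mul_sum]
          exact Finset.sum_congr rfl fun i _ => by ring
      _ = ∑ i : ↥S, ∑ l, c i * (Aalpha α G j l * (b i.1) l) := Finset.sum_comm
      _ = ∑ i : ↥S, (lam i.1 * c i) * (b i.1) j := by
          refine Finset.sum_congr rfl fun i _ => ?_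
          rw [← Finset.mul_sum, hAb i]
          ring
  have hQ : zf ⬝ᵥ (Aalpha α G *ᵥ zf) = ∑ i : ↥S, (lam i.1 * c i) * c i :=
    helper _ _ hmul
  have hzz : zf ⬝ᵥ zf = ∑ i : ↥S, c i * c i := helper c zf hzfun
  -- z is nonzero, so some coefficient is nonzero
  have hzzpos : 0 < zf ⬝ᵥ zf := by
    have hex : ∃ j, zf j ≠ 0 := by
      by_contra hall
      push_neg at hall
      exact hzne (by ext j; exact hall j)
    obtain ⟨j, hj⟩ := hex
    rw [dotProduct]
    refine Finset.sum_pos' (fun k _ => mul_self_nonneg _) ⟨j, Finset.mem_univ j, ?_⟩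
    exact mul_self_pos.mpr hj
  have hex : ∃ i : ↥S, c i ≠ 0 := by
    by_contra hall
    push_neg at hall
    rw [hzz] at hzzpos
    simp [hall] at hzzpos
  obtain ⟨i0, hi0⟩ := hex
  have hlt : ∀ i : ↥S, lam i.1 < α := by
    intro i
    exact (Finset.mem_filter.mp i.2).2
  have hQlt : zf ⬝ᵥ (Aalpha α G *ᵥ zf) < α * (zf ⬝ᵥ zf) := by
    rw [hQ, hzz, Finset.mul_sum]
    apply Finset.sum_lt_sum
    · intro i _
      have h1 := hlt i
      nlinarith [mul_self_nonneg (c i)]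
    · exact ⟨i0, Finset.mem_univ i0, by nlinarith [mul_self_pos.mpr hi0, hlt i0]⟩
  have hge := quadForm_ge G α hα0 hα1 D hD zf (fun u hu => hzD u hu)
  have hsq : ∑ v, zf v ^ 2 = zf ⬝ᵥ zf := by
    simp [dotProduct, sq]
  rw [hsq] at hge
  linarith

open Finset in
/-- For `α ∈ [1/2, 1]`, `A_α(G)` has at least `n − γ(G)` eigenvalues in `[α, Δ(G)]`
(with multiplicity). -/
theorem Aalpha_count_ge_order_sub_domination (n : ℕ) (G : SimpleGraph (Fin n))
    [DecidableRel G.Adj] (α : ℝ) (hα0 : 1 / 2 ≤ α) (hα1 : α ≤ 1)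
    (γ : ℕ) (hγ : IsLeast {k | ∃ D : Finset (Fin n), IsDomSet G D ∧ D.card = k} γ) :
    n - γ ≤ (univ.filter fun i : Fin n =>
        α ≤ (Aalpha_isHermitian α G).eigenvalues i ∧
          (Aalpha_isHermitian α G).eigenvalues i ≤ (G.maxDegree : ℝ)).card := by
  classical
  obtain ⟨D, hD, hDcard⟩ := hγ.1
  have hle : ∀ i, (Aalpha_isHermitian α G).eigenvalues i ≤ (G.maxDegree : ℝ) :=
    fun i => eig_le_maxDegree G α hα1 i
  have hfeq : (univ.filter fun i : Fin n =>
        α ≤ (Aalpha_isHermitian α G).eigenvalues i ∧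
          (Aalpha_isHermitian α G).eigenvalues i ≤ (G.maxDegree : ℝ))
      = univ.filter fun i : Fin n => α ≤ (Aalpha_isHermitian α G).eigenvalues i := by
    refine Finset.filter_congr fun i _ => ?_
    exact and_iff_left (hle i)
  rw [hfeq]
  have hsplit := Finset.card_filter_add_card_filter_not
    (s := (univ : Finset (Fin n)))
    (p := fun i => α ≤ (Aalpha_isHermitian α G).eigenvalues i)
  have hneg : (univ.filter fun i : Fin n => ¬ α ≤ (Aalpha_isHermitian α G).eigenvalues i)
      = univ.filter fun i : Fin n => (Aalpha_isHermitian α G).eigenvalues i < α := by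
    refine Finset.filter_congr fun i _ => ?_
    rw [not_le]
  have hcount := count_lt_le_domset G α hα0 hα1 D hD
  rw [hDcard] at hcount
  rw [hneg] at hsplit
  simp only [Finset.card_univ, Fintype.card_fin] at hsplit
  omega
end

section
/- If G is a graph of order n that contains a Hamiltonian path and α ∈ [1/2, 1], then A_α(G) has at least 2⌊n/3⌋ eigenvalues ≥ α (counted with multiplicity). -/
open Finset


lemma key_count {n : ℕ} {M : Matrix (Fin n) (Fin n) ℝ} (hM : M.IsHermitian) {α : ℝ}
    (S : Finset (Fin n))
    (h : ∀ x : Fin n → ℝ, (∀ v, v ∉ S → x v = 0) →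
      α * ∑ v, x v ^ 2 ≤ ∑ u, ∑ v, x u * M u v * x v) :
    S.card ≤ (Finset.univ.filter fun i => α ≤ hM.eigenvalues i).card := by
  classical
  set B := hM.eigenvectorBasis with hB
  set Big := Finset.univ.filter fun i => α ≤ hM.eigenvalues i with hBig
  by_contra hlt
  push_neg at hlt
  set e : EuclideanSpace ℝ (Fin n) ≃ (Fin n → ℝ) := WithLp.equiv 2 _ with he
  -- the coefficient map
  set c : (Fin n → ℝ) → Fin n → ℝ := fun x i => inner (𝕜 := ℝ) (B i) (e.symm x) with hc
  -- Parseval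
  have parseval : ∀ x : Fin n → ℝ, ∑ v, x v ^ 2 = ∑ i, c x i ^ 2 := by
    intro x
    have h1 := B.sum_inner_mul_inner (e.symm x) (e.symm x)
    have h2 : (inner (𝕜 := ℝ) (e.symm x) (e.symm x)) = ∑ v, x v ^ 2 := by
      simp [PiLp.inner_apply, RCLike.inner_apply, sq, he]
      rw [EuclideanSpace.norm_eq, Real.mul_self_sqrt (by positivity)]
      simp [sq]
    rw [h2] at h1
    rw [← h1]
    refine Finset.sum_congr rfl fun i _ => ?_
    simp only [hc]
    rw [real_inner_comm (e.symm x) (B i), sq]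
  -- quadratic form in eigencoordinates
  have quad : ∀ x : Fin n → ℝ,
      ∑ u, ∑ v, x u * M u v * x v = ∑ i, hM.eigenvalues i * c x i ^ 2 := by
    intro x
    have hsymm : M.transpose = M := by
      have := hM.eq
      rwa [Matrix.conjTranspose_eq_transpose_of_trivial] at this
    have hBi : ∀ i, dotProduct (e (B i)) (M.mulVec x) = hM.eigenvalues i * c x i := by
      intro i
      rw [Matrix.dotProduct_mulVec, ← Matrix.mulVec_transpose, hsymm,
        he, WithLp.equiv_apply, hB, hM.mulVec_eigenvectorBasis]
      simp [hc, PiLp.inner_apply, RCLike.inner_apply, dotProduct, he,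
        smul_dotProduct, smul_eq_mul, Finset.mul_sum, mul_assoc]
      exact Finset.sum_congr rfl fun _ _ => by rw [hB, mul_comm (x _)]
    have h1 := B.sum_inner_mul_inner (e.symm x) (e.symm (M.mulVec x))
    have hL : ∑ u, ∑ v, x u * M u v * x v = inner (𝕜 := ℝ) (e.symm x) (e.symm (M.mulVec x)) := by
      simp [PiLp.inner_apply, RCLike.inner_apply, Matrix.mulVec, dotProduct, he,
        Finset.mul_sum, mul_assoc, mul_comm, mul_left_comm]
    rw [hL, ← h1]
    refine Finset.sum_congr rfl fun i _ => ?_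
    have : (inner (𝕜 := ℝ) (B i) (e.symm (M.mulVec x))) = hM.eigenvalues i * c x i := by
      rw [← hBi i]
      simp [PiLp.inner_apply, RCLike.inner_apply, dotProduct, he, mul_comm]
    rw [this]
    have hcomm : (inner (𝕜 := ℝ) (e.symm x) (B i)) = c x i := real_inner_comm _ _
    rw [hcomm]
    ring
  -- build the linear map from functions on S to coefficients on Big
  set ext : (S → ℝ) →ₗ[ℝ] (Fin n → ℝ) := Function.ExtendByZero.linearMap ℝ (Subtype.val : S → Fin n) with hext
  have hval_inj : Function.Injective (Subtype.val : S → Fin n) := Subtype.val_injective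
  have hext_mem : ∀ (y : S → ℝ) (v : Fin n) (hv : v ∈ S), ext y v = y ⟨v, hv⟩ := by
    intro y v hv
    have := hval_inj.extend_apply y (0 : Fin n → ℝ) ⟨v, hv⟩
    exact this
  have hext_nmem : ∀ (y : S → ℝ) (v : Fin n), v ∉ S → ext y v = 0 := by
    intro y v hv
    have : ¬ ∃ a : S, (a : Fin n) = v := by
      rintro ⟨a, rfl⟩; exact hv a.2
    simp [hext, Function.ExtendByZero.linearMap, LinearMap.coe_mk, AddHom.coe_mk, Function.extend_apply' _ _ _ this]
    exact Function.extend_apply' _ _ _ this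
  -- coefficient linear map
  set cLin : (Fin n → ℝ) →ₗ[ℝ] (Big → ℝ) :=
    { toFun := fun x i => c x i
      map_add' := by
        intro a b
        funext i
        show (inner (𝕜 := ℝ) (B i) (e.symm (a + b))) = _
        rw [show e.symm (a + b) = e.symm a + e.symm b from rfl, inner_add_right]
        rfl
      map_smul' := by
        intro r a
        funext i
        show (inner (𝕜 := ℝ) (B i) (e.symm (r • a))) = _
        rw [show e.symm (r • a) = r • e.symm a from rfl, inner_smul_right]
        rfl } with hcLin
  have hnotinj : ¬ Function.Injective (cLin.comp ext) := by
    intro hinj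
    have := LinearMap.finrank_le_finrank_of_injective hinj
    simp only [Module.finrank_fintype_fun_eq_card, Fintype.card_coe] at this
    omega
  rw [Function.not_injective_iff] at hnotinj
  obtain ⟨y₁, y₂, hLeq, hyne⟩ := hnotinj
  set y := y₁ - y₂ with hy
  have hsupp : ∀ v ∉ S, ext y v = 0 := fun v hv => hext_nmem y v hv
  have hcBig : ∀ i ∈ Big, c (ext y) i = 0 := by
    intro i hi
    have h0 : cLin.comp ext y = 0 := by
      rw [hy, map_sub, hLeq, sub_self]
    exact congrFun h0 ⟨i, hi⟩
  have hxne : ext y ≠ 0 := by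
    intro h0
    apply hyne
    rw [← sub_eq_zero]
    funext a
    have h2 := hext_mem y ↑a a.2
    rw [h0] at h2
    exact (show y a = 0 from h2.symm)
  -- some coefficient is nonzero
  have hcne : ∃ i, c (ext y) i ≠ 0 := by
    by_contra hall
    push_neg at hall
    apply hxne
    have hsum : ∑ v, ext y v ^ 2 = 0 := by
      rw [parseval (ext y)]
      exact Finset.sum_eq_zero fun i _ => by rw [hall i]; ring
    funext v
    have hv := (Finset.sum_eq_zero_iff_of_nonneg (fun i _ => sq_nonneg (ext y i))).1 hsum v (Finset.mem_univ v)
    exact pow_eq_zero_iff (n := 2) (by norm_num) |>.1 hv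
  obtain ⟨i₀, hi₀⟩ := hcne
  have hi₀nB : i₀ ∉ Big := fun hmem => hi₀ (hcBig i₀ hmem)
  have hi₀lt : hM.eigenvalues i₀ < α := by
    have hnle : ¬ α ≤ hM.eigenvalues i₀ := by
      intro hge; exact hi₀nB (by simp [hBig, hge])
    exact lt_of_not_ge hnle
  -- the contradiction
  have hle := h (ext y) hsupp
  rw [parseval (ext y), quad (ext y), Finset.mul_sum] at hle
  have hstrict : ∑ i, hM.eigenvalues i * c (ext y) i ^ 2 < ∑ i, α * c (ext y) i ^ 2 := by
    apply Finset.sum_lt_sum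
    · intro i _
      by_cases hiB : i ∈ Big
      · rw [hcBig i hiB]; simp
      · have hlt2 : hM.eigenvalues i < α := by
          simp only [hBig, Finset.mem_filter, Finset.mem_univ, true_and] at hiB
          exact lt_of_not_ge hiB
        nlinarith [sq_nonneg (c (ext y) i)]
    · exact ⟨i₀, Finset.mem_univ i₀,
        mul_lt_mul_of_pos_right hi₀lt (sq_pos_of_ne_zero hi₀)⟩
  linarith

/-- `getVert` is injective on `[0, length]` for a path. -/
lemma getVert_injOn_aux {V : Type*} {G : SimpleGraph V} {u v : V} (p : G.Walk u v) :
    p.IsPath → ∀ i ≤ p.length, ∀ j ≤ p.length, p.getVert i = p.getVert j → i = j := by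
  induction p with
  | nil => intro _ i hi j hj _; simp at hi hj; omega
  | @cons u w v h q ih =>
    intro hp i hi j hj heq
    rw [SimpleGraph.Walk.cons_isPath_iff] at hp
    obtain ⟨hq, hus⟩ := hp
    match i, j with
    | 0, 0 => rfl
    | 0, j+1 =>
      exfalso
      apply hus
      rw [SimpleGraph.Walk.mem_support_iff_exists_getVert]
      refine ⟨j, ?_, ?_⟩
      · have : (SimpleGraph.Walk.cons h q).getVert (j+1) = q.getVert j :=
          SimpleGraph.Walk.getVert_cons_succ q h
        rw [this] at heq
        rw [← heq]
        simp [SimpleGraph.Walk.getVert_zero]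
      · simp only [SimpleGraph.Walk.length_cons] at hj; omega
    | i+1, 0 =>
      exfalso
      apply hus
      rw [SimpleGraph.Walk.mem_support_iff_exists_getVert]
      refine ⟨i, ?_, ?_⟩
      · have : (SimpleGraph.Walk.cons h q).getVert (i+1) = q.getVert i :=
          SimpleGraph.Walk.getVert_cons_succ q h
        rw [this] at heq
        rw [heq]
        simp [SimpleGraph.Walk.getVert_zero]
      · simp only [SimpleGraph.Walk.length_cons] at hi; omega
    | i+1, j+1 =>
      simp only [SimpleGraph.Walk.length_cons] at hi hj
      have heq' : q.getVert i = q.getVert j := by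
        have h1 : (SimpleGraph.Walk.cons h q).getVert (i+1) = q.getVert i :=
          SimpleGraph.Walk.getVert_cons_succ q h
        have h2 : (SimpleGraph.Walk.cons h q).getVert (j+1) = q.getVert j :=
          SimpleGraph.Walk.getVert_cons_succ q h
        rw [h1, h2] at heq; exact heq
      have := ih hq i (by omega) j (by omega) heq'
      omega


open Finset in
/-- If `G` has a Hamiltonian path and `α ∈ [1/2, 1]`, then `A_α(G)` has at least
`2⌊n/3⌋` eigenvalues `≥ α` (with multiplicity). -/
theorem Aalpha_hamiltonian_path_count (n : ℕ) (G : SimpleGraph (Fin n))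
    [DecidableRel G.Adj]
    (hham : ∃ (u v : Fin n) (p : G.Walk u v), p.IsHamiltonian)
    (α : ℝ) (hα0 : 1 / 2 ≤ α) (hα1 : α ≤ 1) :
    2 * (n / 3) ≤ (univ.filter fun i : Fin n =>
        α ≤ (Aalpha_isHermitian α G).eigenvalues i).card := by
  classical
  obtain ⟨u, v, p, hp⟩ := hham
  set k := n / 3 with hk
  rcases Nat.eq_zero_or_pos k with hk0 | hkpos
  · rw [hk0]; simp
  have h3k : 3 * k ≤ n := by
    have := Nat.div_mul_le_self n 3
    omega
  have hn3 : 3 ≤ n := by omega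
  have hplen : p.length = n - 1 := by
    have := hp.length_eq
    simpa using this
  set g : ℕ → Fin n := fun i => p.getVert i with hg
  have hginj : ∀ i ≤ n - 1, ∀ j ≤ n - 1, g i = g j → i = j := by
    intro i hi j hj hgij
    exact getVert_injOn_aux p hp.isPath i (by omega) j (by omega) hgij
  have hidx : ∀ j, j < k → 3*j+2 ≤ n - 1 := by intro j hj; omega
  have hadjg : ∀ i, i < n - 1 → G.Adj (g i) (g (i+1)) := by
    intro i hi
    exact p.adj_getVert_succ (by omega)
  set Sa : Finset (Fin n) := (range k).image (fun j => g (3*j)) with hSa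
  set Sc : Finset (Fin n) := (range k).image (fun j => g (3*j+2)) with hSc
  set Sb : Finset (Fin n) := (range k).image (fun j => g (3*j+1)) with hSb
  have hSaInj : Set.InjOn (fun j => g (3*j)) (range k) := by
    intro j1 h1 j2 h2 he
    simp only [coe_range, Set.mem_Iio] at h1 h2
    have := hginj (3*j1) (by omega) (3*j2) (by omega) he
    omega
  have hScInj : Set.InjOn (fun j => g (3*j+2)) (range k) := by
    intro j1 h1 j2 h2 he
    simp only [coe_range, Set.mem_Iio] at h1 h2
    have := hginj (3*j1+2) (by omega) (3*j2+2) (by omega) he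
    omega
  have hSbInj : Set.InjOn (fun j => g (3*j+1)) (range k) := by
    intro j1 h1 j2 h2 he
    simp only [coe_range, Set.mem_Iio] at h1 h2
    have := hginj (3*j1+1) (by omega) (3*j2+1) (by omega) he
    omega
  set S : Finset (Fin n) := Sa ∪ Sc with hS
  have hdisj : Disjoint Sa Sc := by
    rw [Finset.disjoint_left]
    rintro a ha hc
    simp only [hSa, hSc, mem_image, mem_range] at ha hc
    obtain ⟨j1, hj1, he1⟩ := ha
    obtain ⟨j2, hj2, he2⟩ := hc
    have := hginj (3*j1) (by omega) (3*j2+2) (by omega) (by rw [he1, he2])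
    omega
  have hdisjb : Disjoint S Sb := by
    rw [Finset.disjoint_left]
    rintro a ha hb
    simp only [hSb, mem_image, mem_range] at hb
    obtain ⟨j2, hj2, he2⟩ := hb
    rcases Finset.mem_union.1 ha with h | h <;>
      simp only [hSa, hSc, mem_image, mem_range] at h
    · obtain ⟨j1, hj1, he1⟩ := h
      have := hginj (3*j1) (by omega) (3*j2+1) (by omega) (by rw [he1, he2])
      omega
    · obtain ⟨j1, hj1, he1⟩ := h
      have := hginj (3*j1+2) (by omega) (3*j2+1) (by omega) (by rw [he1, he2])
      omega
  have hScard : S.card = 2 * k := by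
    rw [hS, Finset.card_union_of_disjoint hdisj, hSa, hSc,
      Finset.card_image_of_injOn hSaInj, Finset.card_image_of_injOn hScInj,
      Finset.card_range]
    ring
  -- the quadratic form hypothesis
  have hquad : ∀ x : Fin n → ℝ, (∀ w ∉ S, x w = 0) →
      α * ∑ w, x w ^ 2 ≤ ∑ u, ∑ w, x u * Aalpha α G u w * x w := by
    intro x hsupp
    set f : Fin n → Fin n → ℝ :=
      fun a b => if G.Adj a b then α*(x a^2 + x b^2)/2 + (1-α)*(x a * x b) else 0 with hf
    have hdeg : ∀ u : Fin n, (G.degree u : ℝ) = ∑ v, (if G.Adj u v then (1:ℝ) else 0) := by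
      intro u
      rw [SimpleGraph.degree, SimpleGraph.neighborFinset_eq_filter, Finset.card_filter]
      push_cast
      exact Finset.sum_congr rfl fun v _ => by split <;> norm_num
    have e1 : ∑ u, ∑ w, (if G.Adj u w then x u ^ 2 else 0) = ∑ u, (G.degree u : ℝ) * x u ^ 2 := by
      refine Finset.sum_congr rfl fun u _ => ?_
      have h1 : ∀ w, (if G.Adj u w then x u ^ 2 else 0) = (if G.Adj u w then (1:ℝ) else 0) * x u ^ 2 := by
        intro w; split <;> ring
      rw [Finset.sum_congr rfl fun w _ => h1 w, ← Finset.sum_mul, ← hdeg u]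
    have e2 : ∑ u, ∑ w, (if G.Adj u w then x w ^ 2 else 0) = ∑ u, (G.degree u : ℝ) * x u ^ 2 := by
      rw [Finset.sum_comm]
      refine Finset.sum_congr rfl fun w _ => ?_
      have h1 : ∀ u, (if G.Adj u w then x w ^ 2 else 0) = (if G.Adj w u then (1:ℝ) else 0) * x w ^ 2 := by
        intro u
        by_cases h2 : G.Adj u w
        · rw [if_pos h2, if_pos h2.symm]; ring
        · rw [if_neg h2, if_neg (fun h3 => h2 h3.symm)]; ring
      rw [Finset.sum_congr rfl fun u _ => h1 u, ← Finset.sum_mul, ← hdeg w]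
    have stepA : ∑ u, ∑ w, x u * Aalpha α G u w * x w = ∑ u, ∑ w, f u w := by
      have expand : ∀ u w, x u * Aalpha α G u w * x w =
          α * (if u = w then (G.degree u : ℝ) * x u ^ 2 else 0)
          + (1-α) * (if G.Adj u w then x u * x w else 0) := by
        intro u w
        simp only [Aalpha, Matrix.add_apply, Matrix.smul_apply, Matrix.diagonal_apply,
          SimpleGraph.adjMatrix_apply, smul_eq_mul]
        by_cases h1 : u = w
        · subst h1
          have hno : ¬ G.Adj u u := G.irrefl
          simp only [hno, if_true, if_false, if_pos rfl]
          ring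
        · by_cases h2 : G.Adj u w <;> simp [h1, h2] <;> ring
      have expandf : ∀ u w, f u w =
          α * ((if G.Adj u w then x u ^ 2 else 0) + (if G.Adj u w then x w ^ 2 else 0))/2
          + (1-α) * (if G.Adj u w then x u * x w else 0) := by
        intro u w
        simp only [hf]
        split <;> ring
      calc ∑ u, ∑ w, x u * Aalpha α G u w * x w
          = ∑ u, ∑ w, (α * (if u = w then (G.degree u : ℝ) * x u ^ 2 else 0)
            + (1-α) * (if G.Adj u w then x u * x w else 0)) := by
            exact Finset.sum_congr rfl fun u _ => Finset.sum_congr rfl fun w _ => expand u w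
        _ = α * ∑ u, (G.degree u : ℝ) * x u ^ 2
            + (1-α) * ∑ u, ∑ w, (if G.Adj u w then x u * x w else 0) := by
            rw [Finset.sum_congr rfl fun u (_ : u ∈ univ) => Finset.sum_add_distrib]
            rw [Finset.sum_add_distrib]
            congr 1
            · rw [Finset.mul_sum]
              refine Finset.sum_congr rfl fun u _ => ?_
              rw [← Finset.mul_sum]
              congr 1
              simp
            · rw [Finset.mul_sum]
              refine Finset.sum_congr rfl fun u _ => ?_
              rw [← Finset.mul_sum]
        _ = ∑ u, ∑ w, f u w := by
            rw [Finset.sum_congr rfl fun u (_ : u ∈ univ) =>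
              Finset.sum_congr rfl fun w (_ : w ∈ univ) => expandf u w]
            rw [Finset.sum_congr rfl fun u (_ : u ∈ univ) => Finset.sum_add_distrib]
            rw [Finset.sum_add_distrib]
            congr 1
            · have : ∀ u : Fin n, ∑ w, α * ((if G.Adj u w then x u ^ 2 else 0)
                  + (if G.Adj u w then x w ^ 2 else 0))/2
                  = α * ((∑ w, (if G.Adj u w then x u ^ 2 else 0))
                    + ∑ w, (if G.Adj u w then x w ^ 2 else 0))/2 := by
                intro u
                conv_rhs => rw [← Finset.sum_add_distrib]
                rw [Finset.mul_sum, Finset.sum_div]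
              rw [Finset.sum_congr rfl fun u (_ : u ∈ univ) => this u]
              have h2 : ∑ u : Fin n, α * ((∑ w, (if G.Adj u w then x u ^ 2 else 0))
                    + ∑ w, (if G.Adj u w then x w ^ 2 else 0))/2
                  = α * ((∑ u : Fin n, ∑ w, (if G.Adj u w then x u ^ 2 else 0))
                    + ∑ u : Fin n, ∑ w, (if G.Adj u w then x w ^ 2 else 0))/2 := by
                conv_rhs => rw [← Finset.sum_add_distrib]
                rw [Finset.mul_sum, Finset.sum_div]
              rw [h2, e1, e2]
              ring
            · rw [Finset.mul_sum]
              refine Finset.sum_congr rfl fun u _ => ?_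
              rw [← Finset.mul_sum]
    -- nonnegativity of f
    have hfnn : ∀ a b, 0 ≤ f a b := by
      intro a b
      simp only [hf]
      split
      · nlinarith [sq_nonneg (x a + x b), sq_nonneg (x a - x b), sq_nonneg (x a), sq_nonneg (x b)]
      · exact le_refl 0
    -- lower bound via the special rows
    have hxb : ∀ j, j < k → x (g (3*j+1)) = 0 := by
      intro j hj
      apply hsupp
      intro hmem
      exact Finset.disjoint_left.1 hdisjb hmem
        (by rw [hSb]; exact Finset.mem_image.2 ⟨j, Finset.mem_range.2 hj, rfl⟩)
    have hrow_nn : ∀ u : Fin n, 0 ≤ ∑ w, f u w :=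
      fun u => Finset.sum_nonneg fun w _ => hfnn u w
    have hrestrict : ∑ u ∈ S ∪ Sb, ∑ w, f u w ≤ ∑ u, ∑ w, f u w :=
      Finset.sum_le_sum_of_subset_of_nonneg (Finset.subset_univ _)
        (fun u _ _ => hrow_nn u)
    have hsplit : ∑ u ∈ S ∪ Sb, ∑ w, f u w
        = ∑ u ∈ Sa, ∑ w, f u w + ∑ u ∈ Sc, ∑ w, f u w + ∑ u ∈ Sb, ∑ w, f u w := by
      rw [Finset.sum_union hdisjb, hS, Finset.sum_union hdisj]
    -- per-row lower bounds
    have hrowA : ∀ j, j < k → α * x (g (3*j)) ^ 2 / 2 ≤ ∑ w, f (g (3*j)) w := by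
      intro j hj
      have hadj1 : G.Adj (g (3*j)) (g (3*j+1)) := hadjg (3*j) (by omega)
      have hfval : f (g (3*j)) (g (3*j+1)) = α * x (g (3*j)) ^ 2 / 2 := by
        simp only [hf]
        simp only [hadj1, if_true, hxb j hj]
        ring
      calc α * x (g (3*j)) ^ 2 / 2 = ∑ w ∈ {g (3*j+1)}, f (g (3*j)) w := by
            rw [Finset.sum_singleton, hfval]
        _ ≤ ∑ w, f (g (3*j)) w :=
            Finset.sum_le_sum_of_subset_of_nonneg (Finset.subset_univ _)
              (fun w _ _ => hfnn _ w)
    have hrowC : ∀ j, j < k → α * x (g (3*j+2)) ^ 2 / 2 ≤ ∑ w, f (g (3*j+2)) w := by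
      intro j hj
      have hadj1 : G.Adj (g (3*j+2)) (g (3*j+1)) := ((hadjg (3*j+1) (by omega))).symm
      have hfval : f (g (3*j+2)) (g (3*j+1)) = α * x (g (3*j+2)) ^ 2 / 2 := by
        simp only [hf]
        simp only [hadj1, if_true, hxb j hj]
        ring
      calc α * x (g (3*j+2)) ^ 2 / 2 = ∑ w ∈ {g (3*j+1)}, f (g (3*j+2)) w := by
            rw [Finset.sum_singleton, hfval]
        _ ≤ ∑ w, f (g (3*j+2)) w :=
            Finset.sum_le_sum_of_subset_of_nonneg (Finset.subset_univ _)
              (fun w _ _ => hfnn _ w)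
    have hrowB : ∀ j, j < k →
        α * x (g (3*j)) ^ 2 / 2 + α * x (g (3*j+2)) ^ 2 / 2 ≤ ∑ w, f (g (3*j+1)) w := by
      intro j hj
      have hadj1 : G.Adj (g (3*j+1)) (g (3*j)) := (hadjg (3*j) (by omega)).symm
      have hadj2 : G.Adj (g (3*j+1)) (g (3*j+2)) := hadjg (3*j+1) (by omega)
      have hac : g (3*j) ≠ g (3*j+2) := by
        intro he
        have := hginj (3*j) (by omega) (3*j+2) (by omega) he
        omega
      have hfval1 : f (g (3*j+1)) (g (3*j)) = α * x (g (3*j)) ^ 2 / 2 := by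
        simp only [hf]
        simp only [hadj1, if_true, hxb j hj]
        ring
      have hfval2 : f (g (3*j+1)) (g (3*j+2)) = α * x (g (3*j+2)) ^ 2 / 2 := by
        simp only [hf]
        simp only [hadj2, if_true, hxb j hj]
        ring
      calc α * x (g (3*j)) ^ 2 / 2 + α * x (g (3*j+2)) ^ 2 / 2
          = ∑ w ∈ {g (3*j), g (3*j+2)}, f (g (3*j+1)) w := by
            rw [Finset.sum_pair hac, hfval1, hfval2]
        _ ≤ ∑ w, f (g (3*j+1)) w :=
            Finset.sum_le_sum_of_subset_of_nonneg (Finset.subset_univ _)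
              (fun w _ _ => hfnn _ w)
    -- sums over the images
    have hsumA : ∑ j ∈ range k, α * x (g (3*j)) ^ 2 / 2 ≤ ∑ u ∈ Sa, ∑ w, f u w := by
      rw [hSa, Finset.sum_image hSaInj]
      exact Finset.sum_le_sum fun j hj => hrowA j (Finset.mem_range.1 hj)
    have hsumC : ∑ j ∈ range k, α * x (g (3*j+2)) ^ 2 / 2 ≤ ∑ u ∈ Sc, ∑ w, f u w := by
      rw [hSc, Finset.sum_image hScInj]
      exact Finset.sum_le_sum fun j hj => hrowC j (Finset.mem_range.1 hj)
    have hsumB : ∑ j ∈ range k, (α * x (g (3*j)) ^ 2 / 2 + α * x (g (3*j+2)) ^ 2 / 2)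
        ≤ ∑ u ∈ Sb, ∑ w, f u w := by
      rw [hSb, Finset.sum_image hSbInj]
      exact Finset.sum_le_sum fun j hj => hrowB j (Finset.mem_range.1 hj)
    -- the norm over S
    have hnorm : α * ∑ w, x w ^ 2
        = ∑ j ∈ range k, α * x (g (3*j)) ^ 2 + ∑ j ∈ range k, α * x (g (3*j+2)) ^ 2 := by
      have h1 : ∑ w, x w ^ 2 = ∑ w ∈ S, x w ^ 2 := by
        symm
        apply Finset.sum_subset (Finset.subset_univ S)
        intro w _ hw
        rw [hsupp w hw]; ring
      rw [h1, hS, Finset.sum_union hdisj, hSa, hSc, Finset.sum_image hSaInj,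
        Finset.sum_image hScInj, mul_add, Finset.mul_sum, Finset.mul_sum]
    rw [stepA, hnorm]
    have := hrestrict
    rw [hsplit] at this
    have hall : ∑ j ∈ range k, α * x (g (3*j)) ^ 2 + ∑ j ∈ range k, α * x (g (3*j+2)) ^ 2
        ≤ ∑ u ∈ Sa, ∑ w, f u w + ∑ u ∈ Sc, ∑ w, f u w + ∑ u ∈ Sb, ∑ w, f u w := by
      have hB := hsumB
      rw [Finset.sum_add_distrib] at hB
      have hA := hsumA
      have hC := hsumC
      have e3 : ∑ j ∈ range k, α * x (g (3*j)) ^ 2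
          = ∑ j ∈ range k, α * x (g (3*j)) ^ 2 / 2 + ∑ j ∈ range k, α * x (g (3*j)) ^ 2 / 2 := by
        rw [← Finset.sum_add_distrib]
        exact Finset.sum_congr rfl fun j _ => by ring
      have e4 : ∑ j ∈ range k, α * x (g (3*j+2)) ^ 2
          = ∑ j ∈ range k, α * x (g (3*j+2)) ^ 2 / 2 + ∑ j ∈ range k, α * x (g (3*j+2)) ^ 2 / 2 := by
        rw [← Finset.sum_add_distrib]
        exact Finset.sum_congr rfl fun j _ => by ring
      rw [e3, e4]
      linarith
    linarith
  have hmain := key_count (α := α) (Aalpha_isHermitian α G) S hquad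
  rw [hScard] at hmain
  exact hmain
end
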